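/- arXiv:1302.6038 — 8 statements merged into one kernel-verified Lean document; each statement's English description precedes it below -/
import Mathlib

section
/- Let K be a field of characteristic p > 0 and let a ∈ K. For the Artin–Schreier polynomial f(X) = X^p − X − a ∈ K[X]: if f has a root α in K, then all p roots of f lie in K (indeed the roots are exactly α + j for j ranging over the prime field 𝔽_p, so f splits into distinct linear factors over K); and if f has no root in K, then f is irreducible over K. -/
open Polynomial

section AS_helpers

variable (p : ℕ) [hp : Fact p.Prime]

private lemma AS_zmod_prod : (X ^ p - X : (ZMod p)[X]) = ∏ j : ZMod p, (X - C j) := by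
  have hmonic : (X ^ p - X : (ZMod p)[X]).Monic := by
    apply (monic_X_pow p).sub_of_left
    rw [degree_X_pow, degree_X]
    exact_mod_cast hp.out.one_lt
  have hq : Fintype.card (ZMod p) = p := ZMod.card p
  have hroots : (X ^ p - X : (ZMod p)[X]).roots = Finset.univ.val := by
    have := FiniteField.roots_X_pow_card_sub_X (ZMod p)
    rwa [hq] at this
  have hdeg : (X ^ p - X : (ZMod p)[X]).natDegree = p := by
    exact FiniteField.X_pow_card_sub_X_natDegree_eq (ZMod p) hp.out.one_lt
  have := prod_multiset_X_sub_C_of_monic_of_roots_card_eq hmonic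
    (by rw [hroots, hdeg]; simp [hq])
  rw [hroots] at this
  rw [← this]
  rfl

variable {F : Type*} [Field F] [CharP F p]

private lemma AS_prod_F : (X ^ p - X : F[X]) = ∏ j : ZMod p, (X - C ((j.val : F))) := by
  have := congrArg (Polynomial.map (ZMod.castHom (dvd_refl p) F)) (AS_zmod_prod p)
  simpa [Polynomial.map_prod, ZMod.natCast_val] using this

private lemma AS_fixed_iff (c : F) : c ^ p = c ↔ ∃ j : ZMod p, c = (j.val : F) := by
  constructor
  · intro h
    have : Polynomial.eval c (X ^ p - X : F[X]) = 0 := by simp [h]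
    rw [AS_prod_F p, eval_prod] at this
    obtain ⟨j, -, hj⟩ := Finset.prod_eq_zero_iff.mp this
    refine ⟨j, ?_⟩
    simpa [sub_eq_zero] using hj
  · rintro ⟨j, rfl⟩
    have : ((j.val : F)) = ZMod.castHom (dvd_refl p) F j := by
      simp [ZMod.natCast_val]
    rw [this, ← map_pow, ZMod.pow_card]

private lemma AS_root_prod {b a' : F} (h : b ^ p - b - a' = 0) :
    (X ^ p - X - C a' : F[X]) = ∏ j : ZMod p, (X - C (b + (j.val : F))) := by
  have ha' : a' = b ^ p - b := by linear_combination -h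
  have hcomp : (X ^ p - X - C a' : F[X]) = (X ^ p - X : F[X]).comp (X - C b) := by
    rw [sub_comp, pow_comp, X_comp, sub_pow_char]
    rw [ha']
    push_cast [C_sub, C_pow]
    ring
  rw [hcomp, AS_prod_F p, prod_comp]
  refine Finset.prod_congr rfl fun j _ => ?_
  rw [sub_comp, X_comp, C_comp, C_add]
  ring

end AS_helpers

/-- **Artin–Schreier polynomials: split or irreducible.**
Let `K` be a field of characteristic `p > 0` and `a ∈ K`.  For the Artin–Schreier
polynomial `f = X^p - X - a`:  if `f` has a root `α ∈ K`, then all `p` roots of `f`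
lie in `K`; indeed the roots are exactly `α + j` for `j` in the prime field `𝔽_p`,
and `f` splits into distinct linear factors over `K`.  If `f` has no root in `K`,
then `f` is irreducible over `K`. -/
theorem artin_schreier_root_or_irreducible
    {K : Type*} [Field K] (p : ℕ) [hp : Fact p.Prime] [CharP K p] (a : K)
    (f : K[X]) (hf : f = X ^ p - X - C a) :
    (∀ α : K, f.eval α = 0 →
      (∀ x : K, f.eval x = 0 ↔ ∃ j : ZMod p, x = α + (j.val : K)) ∧
      Function.Injective (fun j : ZMod p => α + (j.val : K)) ∧
      f = ∏ j : ZMod p, (X - C (α + (j.val : K)))) ∧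
    ((¬ ∃ α : K, f.eval α = 0) → Irreducible f) := by
  subst hf
  have hp1 : 1 < p := hp.out.one_lt
  -- basic facts about f
  have hmonic : (X ^ p - X - C a : K[X]).Monic := by
    have h2 : (X ^ p - X - C a : K[X]) = X ^ p - (X + C a) := by ring
    rw [h2]
    apply (monic_X_pow p).sub_of_left
    rw [degree_X_pow]
    calc degree (X + C a) ≤ 1 := by
          simpa using degree_X_add_C_le a
          
      _ < (p : WithBot ℕ) := by exact_mod_cast hp1
  have hdegf : (X ^ p - X - C a : K[X]).natDegree = p := by
    have h2 : (X ^ p - X - C a : K[X]) = X ^ p - (X + C a) := by ring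
    rw [h2, natDegree_sub_eq_left_of_natDegree_lt]
    · exact natDegree_X_pow p
    · calc (X + C a : K[X]).natDegree ≤ 1 := le_of_eq (natDegree_X_add_C a)
        _ < (X ^ p : K[X]).natDegree := by rw [natDegree_X_pow]; omega
  constructor
  · -- the root case
    intro α hα
    have hα' : α ^ p - α - a = 0 := by simpa using hα
    have hprod := AS_root_prod p hα'
    refine ⟨?_, ?_, hprod⟩
    · intro x
      rw [hprod, eval_prod]
      rw [Finset.prod_eq_zero_iff]
      constructor
      · rintro ⟨j, -, hj⟩
        exact ⟨j, by simpa [sub_eq_zero] using hj⟩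
      · rintro ⟨j, rfl⟩
        exact ⟨j, Finset.mem_univ j, by simp⟩
    · intro j1 j2 h
      have h' : ((j1.val : K)) = ((j2.val : K)) := by
        simpa using h
      have hinj : Function.Injective (ZMod.castHom (dvd_refl p) K) :=
        (ZMod.castHom (dvd_refl p) K).injective
      apply hinj
      simpa [ZMod.natCast_val] using h'
  · -- the no-root case
    intro hno
    set g : K[X] := X ^ p - X - C a with hg
    set L := g.SplittingField
    haveI : CharP L p := charP_of_injective_algebraMap (algebraMap K L).injective p
    set u : K →+* L := algebraMap K L with hu
    have hsplits : Splits (g.map u) := SplittingField.splits g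
    have hg0 : g ≠ 0 := hmonic.ne_zero
    have hmapg : g.map u = X ^ p - X - C (u a) := by
      simp [hg, Polynomial.map_sub, Polynomial.map_pow]
    obtain ⟨β, hβ⟩ := hsplits.exists_eval_eq_zero
      (by rw [degree_map, degree_eq_natDegree hg0, hdegf]; exact_mod_cast (by omega : p ≠ 0))
    have hβ' : β ^ p - β - u a = 0 := by
      have hβ2 : eval₂ u β (X ^ p - X - C a : K[X]) = 0 := by rwa [eval_map] at hβ
      simpa using hβ2
    have hLprod : g.map u = ∏ j : ZMod p, (X - C (β + (j.val : L))) := by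
      rw [hmapg]; exact AS_root_prod p hβ'
    have hβroot : (g.map u).eval β = 0 := by
      rw [hmapg]; simpa using hβ'
    have hmsum : ∀ m : Multiset L, (m.map (fun r => r - β)).sum = m.sum - m.card • β := by
      intro m
      induction m using Multiset.induction with
      | empty => simp
      | cons x t ih =>
        simp only [Multiset.map_cons, Multiset.sum_cons, Multiset.card_cons, ih, succ_nsmul]
        ring
    -- key: no monic factor of intermediate degree
    have key : ∀ q : K[X], q.Monic → q ∣ g → 0 < q.natDegree → q.natDegree < p → False := by
      intro q hqm hqdvd hq0 hqp
      set mq : L[X] := q.map u with hmq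
      have hmqm : mq.Monic := hqm.map u
      have hmqdvd : mq ∣ g.map u := Polynomial.map_dvd u hqdvd
      have hmapg_splits : Splits (g.map u) := by
        rw [hLprod]
        exact Splits.prod fun j _ => Splits.X_sub_C _
      have hmq_splits : Splits mq :=
        Splits.of_dvd hmapg_splits (hmonic.map u).ne_zero hmqdvd
      have hcard : mq.roots.card = mq.natDegree := splits_iff_card_roots.mp hmq_splits
      have hdeg_mq : mq.natDegree = q.natDegree := natDegree_map u
      -- every root of mq has the form β + j
      have hform : ∀ r ∈ mq.roots, ∃ j : ZMod p, r = β + (j.val : L) := by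
        intro r hr
        have hrroot : (g.map u).eval r = 0 := by
          obtain ⟨cpoly, hcpoly⟩ := hmqdvd
          have hzr := isRoot_of_mem_roots hr
          rw [hcpoly, eval_mul, hzr.eq_zero, zero_mul]
        rw [hLprod, eval_prod] at hrroot
        obtain ⟨j, -, hj⟩ := Finset.prod_eq_zero_iff.mp hrroot
        exact ⟨j, by simpa [sub_eq_zero] using hj⟩
      -- sum of roots in terms of next coefficient
      have hsum : mq.nextCoeff = -mq.roots.sum :=
        hmq_splits.nextCoeff_eq_neg_sum_roots_of_monic hmqm
      have hnext : mq.nextCoeff = u q.nextCoeff := by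
        rw [hmq, nextCoeff_map u.injective]
      -- s = sum of (r - β) over roots, fixed by Frobenius
      set s : L := (mq.roots.map (fun r => r - β)).sum with hs
      have hs_fixed : s ^ p = s := by
        have hfr : frobenius L p s = ((mq.roots.map (fun r => r - β)).map (frobenius L p)).sum :=
          map_multiset_sum (frobenius L p) _
        have hsame : (mq.roots.map (fun r => r - β)).map (frobenius L p)
            = mq.roots.map (fun r => r - β) := by
          rw [Multiset.map_map]
          apply Multiset.map_congr rfl
          intro r hr
          obtain ⟨j, rfl⟩ := hform r hr
          simp only [Function.comp_apply, frobenius_def, add_sub_cancel_left]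
          exact (AS_fixed_iff p _).mpr ⟨j, rfl⟩
        calc s ^ p = frobenius L p s := by rw [frobenius_def]
          _ = s := by rw [hfr, hsame]
      obtain ⟨j₀, hj₀⟩ := (AS_fixed_iff p s).mp hs_fixed
      have hs_mem : s = u ((j₀.val : K)) := by rw [hj₀, map_natCast]
      -- sum of roots = deg • β + s
      have hsum_val : mq.roots.sum = (q.natDegree : L) * β + s := by
        rw [hs, hmsum, hcard, hdeg_mq, nsmul_eq_mul]
        ring
      have hdgL : ((q.natDegree : L)) ≠ 0 := by
        rw [Ne, CharP.cast_eq_zero_iff L p]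
        intro hdvd
        exact absurd (Nat.le_of_dvd hq0 hdvd) (not_le.mpr hqp)
      set c : K := (q.natDegree : K)⁻¹ * (-(q.nextCoeff) - (j₀.val : K)) with hc
      have hβeq : u c = β := by
        have h1 : (q.natDegree : L) * β = -(u q.nextCoeff) - s := by
          rw [hnext, hsum_val] at hsum
          linear_combination hsum
        have h2 : u c = (q.natDegree : L)⁻¹ * (-(u q.nextCoeff) - ((j₀.val : L))) := by
          rw [hc, map_mul, map_inv₀, map_natCast, map_sub, map_neg, map_natCast]
        rw [h2, ← hj₀, ← h1, inv_mul_cancel_left₀ hdgL]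
      -- so g has the root c in K: contradiction
      apply hno
      refine ⟨c, ?_⟩
      have h4 : u (g.eval c) = 0 := by
        have h3 : (g.map u).eval (u c) = u (g.eval c) := by
          rw [eval_map, eval₂_hom]
        rw [← h3, hβeq, hβroot]
      exact u.injective (h4.trans (map_zero u).symm)
    -- now conclude irreducibility
    constructor
    · intro hunit
      have h0 := natDegree_eq_zero_of_isUnit hunit
      rw [hdegf] at h0
      omega
    · intro q r hqr
      by_contra hcon
      push_neg at hcon
      obtain ⟨hq, hr⟩ := hcon
      have hq0 : q ≠ 0 := by rintro rfl; exact hg0 (by rw [hqr, zero_mul])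
      have hr0 : r ≠ 0 := by rintro rfl; exact hg0 (by rw [hqr, mul_zero])
      have hdegsum : q.natDegree + r.natDegree = p := by
        rw [← natDegree_mul hq0 hr0, ← hqr, hg, hdegf]
      have hqd : q.natDegree ≠ 0 := fun h =>
        hq (isUnit_iff_degree_eq_zero.mpr ((degree_eq_natDegree hq0).trans (by simp [h])))
      have hrd : r.natDegree ≠ 0 := fun h =>
        hr (isUnit_iff_degree_eq_zero.mpr ((degree_eq_natDegree hr0).trans (by simp [h])))
      have hlc : q.leadingCoeff ≠ 0 := leadingCoeff_ne_zero.mpr hq0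
      apply key (q * C q.leadingCoeff⁻¹) (monic_mul_leadingCoeff_inv hq0)
      · exact dvd_trans ⟨C q.leadingCoeff, by
          rw [mul_assoc, ← C_mul, inv_mul_cancel₀ hlc, C_1, mul_one]⟩ ⟨r, hqr⟩
      · rw [natDegree_mul hq0 (by simpa using inv_ne_zero hlc), natDegree_C]
        omega
      · rw [natDegree_mul hq0 (by simpa using inv_ne_zero hlc), natDegree_C]
        omega
end

section
/- Let K be a field of characteristic p > 0, let a ∈ K, and suppose the Artin–Schreier polynomial X^p − X − a is irreducible over K. If L is an extension of K generated by a root α of X^p − X − a (i.e. α^p − α = a and L = K(α)), then L/K is a Galois extension of degree p whose Galois group is cyclic of order p (isomorphic to ℤ/pℤ). -/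
open Polynomial IntermediateField

/-- **Artin–Schreier extensions are cyclic of degree `p`.**
Let `K` be a field of characteristic `p > 0`, `a ∈ K`, and suppose the Artin–Schreier
polynomial `X^p - X - a` is irreducible over `K`.  If `L/K` is an extension generated by a
root `α` of `X^p - X - a` (i.e. `α^p - α = a` and `L = K(α)`), then `L/K` is Galois of
degree `p` with cyclic Galois group of order `p` (isomorphic to `ℤ/pℤ`). -/
theorem artin_schreier_extension_cyclic_of_degree_p
    {K L : Type*} [Field K] [Field L] [Algebra K L]
    (p : ℕ) [hp : Fact p.Prime] [CharP K p] (a : K)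
    (hirr : Irreducible ((X : K[X]) ^ p - X - C a))
    (α : L) (hα : α ^ p - α = algebraMap K L a)
    (hgen : IntermediateField.adjoin K ({α} : Set L) = ⊤) :
    IsGalois K L ∧ Module.finrank K L = p ∧
      IsCyclic (L ≃ₐ[K] L) ∧ Nat.card (L ≃ₐ[K] L) = p ∧
      Nonempty ((L ≃ₐ[K] L) ≃* Multiplicative (ZMod p)) := by
  have hpL : CharP L p := charP_of_injective_algebraMap (algebraMap K L).injective p
  have hp1 : (1 : ℕ) < p := hp.out.one_lt
  set f : K[X] := X ^ p - X - C a with hf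
  have hf' : f = X ^ p - (X + C a) := by ring
  have hdegXC : ((X : K[X]) + C a).degree < (p : WithBot ℕ) := by
    calc ((X : K[X]) + C a).degree = 1 := degree_X_add_C a
    _ < (p : WithBot ℕ) := by exact_mod_cast hp1
  have hmonic : f.Monic := by rw [hf']; exact monic_X_pow_sub hdegXC
  have hdeg : f.natDegree = p := by
    rw [hf']
    have : ((X : K[X]) ^ p - (X + C a)).degree = (p : WithBot ℕ) := by
      rw [degree_sub_eq_left_of_degree_lt (by rwa [degree_X_pow])]
      exact degree_X_pow p
    exact natDegree_eq_of_degree_eq_some this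
  have haeval : aeval α f = 0 := by
    simp only [hf, map_sub, map_pow, aeval_X, aeval_C]
    rw [hα]; ring
  have hint : IsIntegral K α := ⟨f, hmonic, by simpa [aeval_def] using haeval⟩
  have hmin : minpoly K α = f := (minpoly.eq_of_irreducible_of_monic hirr haeval hmonic).symm
  -- degree
  have hfinrank : Module.finrank K L = p := by
    have h1 : Module.finrank K (IntermediateField.adjoin K ({α} : Set L)) = p := by
      rw [IntermediateField.adjoin.finrank hint, hmin, hdeg]
    rw [← IntermediateField.finrank_top' (F := K) (E := L), ← hgen]
    exact h1
  have hfd : FiniteDimensional K L :=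
    FiniteDimensional.of_finrank_pos (by rw [hfinrank]; exact hp.out.pos)
  -- the polynomial splits over L as ∏ (X - (α + i)), i ∈ 𝔽ₚ
  let ψ : ZMod p →+* L := ZMod.castHom dvd_rfl L
  have hZ : (X ^ p - X : (ZMod p)[X]) = ∏ x : ZMod p, (X - C x) := by
    have hm : ((X : (ZMod p)[X]) ^ p - X).Monic := by
      have : ((X : (ZMod p)[X]) ^ p - X) = X ^ p - (X + C 0) := by
        simp
      rw [this]
      refine monic_X_pow_sub ?_
      calc ((X : (ZMod p)[X]) + C 0).degree = 1 := degree_X_add_C (0 : ZMod p)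
      _ < (p : WithBot ℕ) := by exact_mod_cast hp1
    have hd : ((X : (ZMod p)[X]) ^ p - X).natDegree = p := by
      have := FiniteField.X_pow_card_sub_X_natDegree_eq (ZMod p) hp1
      simpa using this
    have hroots : ((X : (ZMod p)[X]) ^ p - X).roots = Finset.univ.val := by
      have := FiniteField.roots_X_pow_card_sub_X (ZMod p)
      rwa [ZMod.card p] at this
    have hcard : ((X : (ZMod p)[X]) ^ p - X).roots.card = ((X : (ZMod p)[X]) ^ p - X).natDegree := by
      rw [hroots, hd]; simpa using (ZMod.card p).symm
    have := prod_multiset_X_sub_C_of_monic_of_roots_card_eq hm hcard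
    rw [hroots] at this
    rw [← this]
    rfl
  have hmap : f.map (algebraMap K L) = ∏ x : ZMod p, (X - C (α + ψ x)) := by
    have h1 : ∀ x : ZMod p, ((X : L[X]) - C (ψ x)).comp (X - C α) = X - C (α + ψ x) := by
      intro x
      simp only [sub_comp, X_comp, C_comp, map_add]
      ring
    have h2 : ((X : L[X]) ^ p - X).comp (X - C α) = X ^ p - X - C (α ^ p - α) := by
      simp only [sub_comp, pow_comp, X_comp]
      rw [sub_pow_char]
      simp only [← C_pow, map_sub]
      ring
    have h3 : (X ^ p - X : L[X]) = ∏ x : ZMod p, (X - C (ψ x)) := by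
      have := congrArg (Polynomial.map ψ) hZ
      rw [Polynomial.map_sub, Polynomial.map_pow, map_X,
        ← Polynomial.coe_mapRingHom, map_prod] at this
      simpa only [coe_mapRingHom, Polynomial.map_sub, map_X, map_C] using this
    calc f.map (algebraMap K L) = X ^ p - X - C (α ^ p - α) := by
          simp only [hf, Polynomial.map_sub, Polynomial.map_pow, map_X, map_C, hα]
      _ = ((X : L[X]) ^ p - X).comp (X - C α) := h2.symm
      _ = (∏ x : ZMod p, ((X : L[X]) - C (ψ x))).comp (X - C α) := by rw [← h3]
      _ = ∏ x : ZMod p, (X - C (α + ψ x)) := by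
          rw [prod_comp]
          exact Finset.prod_congr rfl fun x _ => h1 x
  have hsplits : Splits (f.map (algebraMap K L)) := by
    rw [hmap]
    exact Splits.prod fun x _ => Splits.X_sub_C _
  -- splitting field
  have hα_root : α ∈ f.rootSet L := by
    rw [mem_rootSet]
    exact ⟨hmonic.ne_zero, haeval⟩
  have hadjoin_alg : Algebra.adjoin K ({α} : Set L) = ⊤ := by
    have h := IntermediateField.adjoin_simple_toSubalgebra_of_isAlgebraic hint.isAlgebraic
    rw [show IntermediateField.adjoin K ({α} : Set L) = IntermediateField.adjoin K {α} from rfl,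
      hgen] at h
    rw [← h]
    rfl
  have hsf : IsSplittingField K L f := by
    refine ⟨hsplits, ?_⟩
    rw [eq_top_iff, ← hadjoin_alg]
    exact Algebra.adjoin_mono (Set.singleton_subset_iff.mpr hα_root)
  -- separability
  have hder : derivative f = -1 := by
    simp only [hf, derivative_sub, derivative_X_pow, derivative_X, derivative_C]
    rw [CharP.cast_eq_zero K p]
    simp
  have hsep : f.Separable := by
    rw [Polynomial.Separable, hder]
    exact isCoprime_one_right.neg_right
  have hgalois : IsGalois K L := by haveI := hsf; exact IsGalois.of_separable_splitting_field hsep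
  have hcardaut : Nat.card (L ≃ₐ[K] L) = p := by
    rw [IsGalois.card_aut_eq_finrank, hfinrank]
  have hcyc : IsCyclic (L ≃ₐ[K] L) := isCyclic_of_prime_card hcardaut
  refine ⟨hgalois, hfinrank, hcyc, hcardaut, ⟨mulEquivOfPrimeCardEq hcardaut ?_⟩⟩
  simpa using Nat.card_zmod p
end

section
/- Let K be a field of characteristic p > 0 and let L/K be a finite Galois extension of degree p (hence cyclic). Then there exist a ∈ K and α ∈ L with α^p − α = a and L = K(α); that is, every degree-p cyclic extension of K is an Artin–Schreier extension K(℘^{-1}(a)) for some a ∈ K. -/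
/-- **Every degree-`p` cyclic extension in characteristic `p` is Artin–Schreier.**
Let `K` be a field of characteristic `p > 0` and let `L/K` be a finite Galois extension of
degree `p`.  Then there exist `a ∈ K` and `α ∈ L` with `α^p - α = a` and `L = K(α)`;
that is, `L = K(℘⁻¹(a))` for some `a ∈ K`. -/
theorem cyclic_degree_p_extension_is_artin_schreier
    {K L : Type*} [Field K] [Field L] [Algebra K L]
    (p : ℕ) [hp : Fact p.Prime] [CharP K p]
    [FiniteDimensional K L] [IsGalois K L]
    (hdeg : Module.finrank K L = p) :
    ∃ (a : K) (α : L), α ^ p - α = algebraMap K L a ∧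
      IntermediateField.adjoin K ({α} : Set L) = ⊤ := by
  haveI : CharP L p := charP_of_injective_algebraMap (algebraMap K L).injective p
  have hcard : Fintype.card (L ≃ₐ[K] L) = p := by
    rw [← Nat.card_eq_fintype_card, IsGalois.card_aut_eq_finrank, hdeg]
  haveI : IsCyclic (L ≃ₐ[K] L) := isCyclic_of_prime_card (by rw [Nat.card_eq_fintype_card, hcard])
  obtain ⟨σ, hσ⟩ := IsCyclic.exists_generator (α := L ≃ₐ[K] L)
  have hσord : orderOf σ = p := by
    rw [orderOf_eq_card_of_forall_mem_zpowers hσ, Nat.card_eq_fintype_card, hcard]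
  -- trace is surjective, pick β with trace = -1
  obtain ⟨β, hβ⟩ := Algebra.trace_surjective K L (-1)
  -- sum over powers equals sum over all automorphisms
  have hbij : Function.Bijective (fun i : Fin p => σ ^ (i : ℕ)) := by
    rw [Fintype.bijective_iff_injective_and_card, Fintype.card_fin, hcard]
    refine ⟨fun i j hij => ?_, rfl⟩
    have := pow_injOn_Iio_orderOf (x := σ) (by rw [hσord]; exact i.2)
      (by rw [hσord]; exact j.2) hij
    exact Fin.ext this
  have hS : ∀ x : L, ∑ i ∈ Finset.range p, (σ ^ i) x
      = algebraMap K L (Algebra.trace K L x) := by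
    intro x
    rw [trace_eq_sum_automorphisms, ← Fintype.sum_bijective _ hbij _ (fun τ => τ x)
      (fun i => rfl), ← Fin.sum_univ_eq_sum_range]
  set α : L := ∑ i ∈ Finset.range p, (i : L) * (σ ^ i) β with hα
  -- key computation: σ α = α + 1
  have hshift : ∀ g : ℕ → L, g 0 = 0 → g p = 0 →
      ∑ i ∈ Finset.range p, g (i + 1) = ∑ i ∈ Finset.range p, g i := by
    intro g h0 hpz
    have := Finset.sum_range_succ' g p
    rw [Finset.sum_range_succ g p, hpz, h0, add_zero, add_zero] at this
    exact this.symm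
  have hkey : σ α = α + 1 := by
    have h1 : σ α = ∑ i ∈ Finset.range p, (i : L) * (σ ^ (i + 1)) β := by
      rw [hα, map_sum]
      refine Finset.sum_congr rfl fun i _ => ?_
      rw [map_mul, pow_succ', AlgEquiv.mul_apply]
      congr 1
      rw [map_natCast]
    have h2 : ∑ i ∈ Finset.range p, ((i : L) + 1) * (σ ^ (i + 1)) β
        = α := by
      have h2' := hshift (fun j => (j : L) * (σ ^ j) β) (by simp)
        (by simp [CharP.cast_eq_zero L p])
      rw [hα, ← h2']
      exact Finset.sum_congr rfl fun i _ => by push_cast; ring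
    have hσp : σ ^ p = 1 := by rw [← hσord]; exact pow_orderOf_eq_one σ
    have h3 : ∑ i ∈ Finset.range p, (σ ^ (i + 1)) β
        = ∑ i ∈ Finset.range p, (σ ^ i) β := by
      have e1 := Finset.sum_range_succ' (fun j => (σ ^ j) β) p
      have e2 := Finset.sum_range_succ (fun j => (σ ^ j) β) p
      rw [e2] at e1
      simp only [hσp, pow_zero, AlgEquiv.one_apply] at e1
      exact add_right_cancel e1.symm
    have h4 : σ α + ∑ i ∈ Finset.range p, (σ ^ (i+1)) β = α := by
      rw [h1, ← h2, ← Finset.sum_add_distrib]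
      refine Finset.sum_congr rfl fun i _ => ?_
      ring
    rw [h3, hS, hβ, map_neg, map_one] at h4
    linear_combination h4
  -- a := α^p - α is fixed by σ, hence by all, hence in K
  have hfix : σ (α ^ p - α) = α ^ p - α := by
    rw [map_sub, map_pow, hkey, add_pow_char, one_pow]
    ring
  have hfix' : σ⁻¹ (α ^ p - α) = α ^ p - α := by
    conv_lhs => rw [← hfix]
    rw [← AlgEquiv.mul_apply, inv_mul_cancel, AlgEquiv.one_apply]
  have hfixall : ∀ τ : L ≃ₐ[K] L, τ (α ^ p - α) = α ^ p - α := by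
    intro τ
    obtain ⟨n, rfl⟩ := hσ τ
    induction n using Int.induction_on with
    | zero => simp
    | succ n ih =>
        show (σ ^ ((n : ℤ) + 1)) (α ^ p - α) = α ^ p - α
        rw [zpow_add, zpow_one, AlgEquiv.mul_apply, hfix]
        exact ih
    | pred n ih =>
        show (σ ^ (-(n : ℤ) - 1)) (α ^ p - α) = α ^ p - α
        rw [show (-(n:ℤ) - 1) = (-(n:ℤ)) + (-1) by ring, zpow_add,
          zpow_neg_one, AlgEquiv.mul_apply, hfix']
        exact ih
  have hmem : α ^ p - α ∈ (⊥ : IntermediateField K L) := by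
    have : α ^ p - α ∈ IntermediateField.fixedField (⊤ : Subgroup (L ≃ₐ[K] L)) :=
      fun ⟨τ, _⟩ => hfixall τ
    rwa [show IntermediateField.fixedField (⊤ : Subgroup (L ≃ₐ[K] L))
        = ⊥ from ?_] at this
    have := IsGalois.fixedField_fixingSubgroup (⊥ : IntermediateField K L)
    rw [show IntermediateField.fixingSubgroup (⊥ : IntermediateField K L) = ⊤ from ?_] at this
    · exact this
    · refine eq_top_iff.mpr fun τ _ => ?_
      intro ⟨x, hx⟩
      obtain ⟨a, rfl⟩ := IntermediateField.mem_bot.mp hx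
      exact τ.commutes a
  obtain ⟨a, ha⟩ := IntermediateField.mem_bot.mp hmem
  refine ⟨a, α, ha.symm, ?_⟩
  -- K(α) = ⊤ since α ∉ K and [L:K] = p prime
  have hαnot : α ∉ (⊥ : IntermediateField K L) := by
    intro hb
    obtain ⟨c, hc⟩ := IntermediateField.mem_bot.mp hb
    have hcc := σ.commutes c
    rw [hc, hkey] at hcc
    simp at hcc
  set F := IntermediateField.adjoin K ({α} : Set L) with hF
  have hne : F ≠ ⊥ := by
    intro h
    exact hαnot (h ▸ IntermediateField.mem_adjoin_simple_self K α)
  have hmul : Module.finrank K F * Module.finrank F L = p := by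
    rw [← hdeg]
    exact Module.finrank_mul_finrank K F L
  have h1 : Module.finrank K F ≠ 1 := fun h =>
    hne (IntermediateField.finrank_eq_one_iff.mp h)
  have hdvd : Module.finrank K F ∣ p := ⟨_, hmul.symm⟩
  have hpeq : Module.finrank K F = p :=
    ((Nat.Prime.eq_one_or_self_of_dvd hp.out _ hdvd).resolve_left h1)
  exact IntermediateField.eq_of_le_of_finrank_eq le_top
    (by rw [hpeq, IntermediateField.finrank_top', hdeg])
end

section
/- Let p be a prime, q = p^f, and K = 𝔽_q((ϖ)) the field of formal Laurent series over the finite field 𝔽_q with q elements, equipped with its valuation topology. Then the image ℘(K) of the Artin–Schreier map is an open additive subgroup of K (it contains the maximal ideal 𝔭 of the valuation ring), and the quotient group K/℘(K) is annihilated by p (every element of K/℘(K) has additive order dividing p); in particular K/℘(K) is a discrete abelian torsion group. -/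
open Finset
open scoped Multiplicative

/-- Artin–Schreier is surjective on the maximal ideal of `F⟦X⟧` in characteristic `p`. -/
lemma artin_schreier_surj_on_ideal (p : ℕ) [hp : Fact p.Prime]
    (F : Type*) [Field F] [CharP F p] (g : PowerSeries F)
    (hg : PowerSeries.constantCoeff g = 0) :
    ∃ y : PowerSeries F, y ^ p - y = g := by
  haveI : CharP (PowerSeries F) p :=
    charP_of_injective_ringHom (PowerSeries.C_injective (R := F)) p
  have hX : (PowerSeries.X : PowerSeries F) ∣ g := PowerSeries.X_dvd_iff.mpr hg
  -- vanishing of low coefficients of `g ^ p ^ n`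
  have hA : ∀ j n : ℕ, j < p ^ n → PowerSeries.coeff j (g ^ p ^ n) = 0 := by
    intro j n hj
    exact PowerSeries.X_pow_dvd_iff.mp (pow_dvd_pow_of_dvd hX (p ^ n)) j hj
  set S : ℕ → PowerSeries F := fun m => ∑ n ∈ range (m + 1), g ^ p ^ n with hS
  set y : PowerSeries F :=
    PowerSeries.mk fun k => -∑ n ∈ range (k + 1), PowerSeries.coeff k (g ^ p ^ n) with hy
  have hcoeffy : ∀ j m : ℕ, j ≤ m →
      PowerSeries.coeff j y = -∑ n ∈ range (m + 1), PowerSeries.coeff j (g ^ p ^ n) := by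
    intro j m hjm
    have hsub : range (j + 1) ⊆ range (m + 1) := range_subset_range.mpr (by omega)
    have hext : ∀ n ∈ range (m + 1), n ∉ range (j + 1) →
        PowerSeries.coeff j (g ^ p ^ n) = 0 := by
      intro n _ hn
      have hn' : j + 1 ≤ n := by simpa using hn
      exact hA j n (lt_trans (by omega) (Nat.lt_pow_self (n := n) hp.out.one_lt))
    rw [hy, PowerSeries.coeff_mk, Finset.sum_subset hsub hext]
  have hd : ∀ k : ℕ, (PowerSeries.X : PowerSeries F) ^ (k + 1) ∣ (y + S k) := by
    intro k
    rw [PowerSeries.X_pow_dvd_iff]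
    intro j hj
    rw [map_add, hcoeffy j k (by omega), hS]
    simp [map_sum]
  refine ⟨y, ?_⟩
  ext k
  set d : PowerSeries F := y + S k with hdd
  have hdvd : (PowerSeries.X : PowerSeries F) ^ (k + 1) ∣ d := hd k
  have hyd : y = -S k + d := by rw [hdd]; ring
  have hSkp : (S k) ^ p = ∑ n ∈ range (k + 1), g ^ p ^ (n + 1) := by
    rw [hS, sum_pow_char]
    exact Finset.sum_congr rfl fun n _ => by rw [← pow_mul, pow_succ]
  have hnegp : (-(S k)) ^ p = -((S k) ^ p) := by
    rw [← zero_sub, sub_pow_char, zero_pow hp.out.ne_zero, zero_sub]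
  have hyp : y ^ p = -((S k) ^ p) + d ^ p := by
    rw [hyd, add_pow_char, hnegp]
  have hSk' : S k = (∑ n ∈ range k, g ^ p ^ (n + 1)) + g := by
    simp only [hS]
    rw [Finset.sum_range_succ' (fun n => g ^ p ^ n) k]
    simp
  have key : y ^ p - y = g + (-(g ^ p ^ (k + 1)) + (d ^ p - d)) := by
    rw [hyp, hSkp, Finset.sum_range_succ (fun n => g ^ p ^ (n + 1)) k, hyd, hSk']
    ring
  rw [key]
  have h1 : PowerSeries.coeff k (g ^ p ^ (k + 1)) = 0 :=
    hA k (k + 1) (lt_trans (Nat.lt_succ_self k) (Nat.lt_pow_self (n := k + 1) hp.out.one_lt))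
  have h2 : PowerSeries.coeff k d = 0 :=
    PowerSeries.X_pow_dvd_iff.mp hdvd k (Nat.lt_succ_self k)
  have h3 : PowerSeries.coeff k (d ^ p) = 0 :=
    PowerSeries.X_pow_dvd_iff.mp (hdvd.trans (dvd_pow_self d hp.out.ne_zero)) k
      (Nat.lt_succ_self k)
  simp [h1, h2, h3]

/-- **`℘(K)` is an open subgroup of `K = 𝔽_q((ϖ))` and `K/℘(K)` is killed by `p`.**
Let `p` be a prime, `q = p^f`, and `K = 𝔽_q((ϖ))` the field of formal Laurent series over
the finite field with `q` elements, with its valuation topology.  Then the image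
`℘(K) = {y^p - y : y ∈ K}` is an additive subgroup of `K` which is open (it contains the
maximal ideal `𝔭` of the valuation ring), and the quotient `K/℘(K)` is annihilated by `p`,
i.e. `p • x ∈ ℘(K)` for every `x ∈ K`; in particular `K/℘(K)` is a discrete abelian
torsion group. -/
theorem artin_schreier_range_open_and_quotient_torsion
    (p f : ℕ) [hp : Fact p.Prime] (hf : f ≠ 0)
    (F : Type*) [Field F] [Fintype F] (hcard : Fintype.card F = p ^ f) :
    ∃ W : AddSubgroup (LaurentSeries F),
      (W : Set (LaurentSeries F)) = Set.range (fun y : LaurentSeries F => y ^ p - y) ∧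
      IsOpen (W : Set (LaurentSeries F)) ∧
      (∀ g : PowerSeries F, PowerSeries.constantCoeff g = 0 →
        (g : LaurentSeries F) ∈ W) ∧
      (∀ x : LaurentSeries F, p • x ∈ W) := by
  -- `F` has characteristic `p`
  haveI hcharF : CharP F p := by
    haveI : CharP F (ringChar F) := ringChar.charP F
    obtain ⟨n, hnp, hn⟩ := FiniteField.card F (ringChar F)
    have hdvd : p ∣ ringChar F := by
      have : p ∣ ringChar F ^ (n : ℕ) := by
        rw [← hn, hcard]
        exact dvd_pow_self p hf
      exact hp.out.dvd_of_dvd_pow this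
    have : p = ringChar F := (Nat.prime_dvd_prime_iff_eq hp.out hnp).mp hdvd
    exact this ▸ ringChar.charP F
  haveI hcharK : CharP (LaurentSeries F) p :=
    charP_of_injective_ringHom (HahnSeries.C_injective (Γ := ℤ) (R := F)) p
  -- the Artin–Schreier additive homomorphism
  set ψ : LaurentSeries F →+ LaurentSeries F :=
    AddMonoidHom.mk' (fun y => y ^ p - y)
      (fun a b => by
        show (a + b) ^ p - (a + b) = (a ^ p - a) + (b ^ p - b)
        rw [add_pow_char]; ring) with hψ
  refine ⟨ψ.range, rfl, ?_, ?_, ?_⟩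
  · -- openness; first prove the ideal inclusion and use it
    have hideal : ∀ g : PowerSeries F, PowerSeries.constantCoeff g = 0 →
        (g : LaurentSeries F) ∈ ψ.range := by
      intro g hg
      obtain ⟨y, hy⟩ := artin_schreier_surj_on_ideal p F g hg
      refine ⟨(y : LaurentSeries F), ?_⟩
      have := congrArg (fun h : PowerSeries F => (h : LaurentSeries F)) hy
      simpa [hψ, PowerSeries.coe_sub, PowerSeries.coe_pow] using this
    apply AddSubgroup.isOpen_of_mem_nhds
    rw [Valued.mem_nhds_zero]
    refine ⟨1, fun x hx => ?_⟩
    have hle1 : Valued.v x ≤ (1 : WithZero (Multiplicative ℤ)) := le_of_lt (by simpa using hx)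
    obtain ⟨g, hg⟩ := (LaurentSeries.val_le_one_iff_eq_coe F x).mp hle1
    have hval : Valued.v x ≤ ((Multiplicative.ofAdd (-(1 : ℤ)) : Multiplicative ℤ) : WithZero (Multiplicative ℤ)) := by
      by_cases h0 : Valued.v x = 0
      · simp [h0]
      · obtain ⟨a, ha⟩ := WithZero.ne_zero_iff_exists.mp h0
        have hxa : Valued.v x < (1 : WithZero (Multiplicative ℤ)) := by simpa using hx
        rw [← ha, ← WithZero.coe_one, WithZero.coe_lt_coe] at hxa
        rw [← ha, WithZero.coe_le_coe]
        have hlt : Multiplicative.toAdd a < (0 : ℤ) := hxa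
        exact Multiplicative.toAdd_le.mp (show Multiplicative.toAdd a ≤ -1 by omega)
    have hcoeff0 : x.coeff 0 = 0 :=
      LaurentSeries.valuation_le_iff_coeff_lt_eq_zero F (D := 1) |>.mp hval 0 (by norm_num)
    have hg0 : PowerSeries.constantCoeff g = 0 := by
      have h := LaurentSeries.coeff_coe_powerSeries g (0 : ℕ)
      rw [hg, Nat.cast_zero, hcoeff0] at h
      rw [← PowerSeries.coeff_zero_eq_constantCoeff_apply, ← h]
    rw [← hg]
    exact hideal g hg0
  · intro g hg
    obtain ⟨y, hy⟩ := artin_schreier_surj_on_ideal p F g hg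
    refine ⟨(y : LaurentSeries F), ?_⟩
    have := congrArg (fun h : PowerSeries F => (h : LaurentSeries F)) hy
    simpa [hψ, PowerSeries.coe_sub, PowerSeries.coe_pow] using this
  · intro x
    have : (p : LaurentSeries F) = 0 := CharP.cast_eq_zero _ p
    have hzero : p • x = 0 := by rw [nsmul_eq_mul, this, zero_mul]
    rw [hzero]
    exact zero_mem _
end

section
/- Let p be a prime, q = p^f, and K = 𝔽_q((ϖ)) the field of formal Laurent series over the finite field 𝔽_q with q elements. Then the quotient group K/℘(K) is countably infinite. -/
open HahnSeries

noncomputable section AS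

variable (p : ℕ) [hp : Fact p.Prime] (F : Type*) [Field F] [CharP F p]

/-- Multiplication by `p` as an order embedding of `ℤ`. -/
def femb : ℤ ↪o ℤ :=
  OrderEmbedding.ofStrictMono (fun k : ℤ => (p : ℤ) * k)
    (fun _ _ hab => mul_lt_mul_of_pos_left hab (by exact_mod_cast hp.out.pos))

lemma femb_apply (k : ℤ) : femb p k = (p : ℤ) * k := rfl

/-- The Frobenius on Laurent series, described explicitly. -/
def psi (x : LaurentSeries F) : LaurentSeries F :=
  HahnSeries.embDomain (femb p) (x.map (frobenius F p))

lemma psi_coeff_mul (x : LaurentSeries F) (j : ℤ) :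
    (psi p F x).coeff ((p : ℤ) * j) = (x.coeff j) ^ p := by
  rw [psi, ← femb_apply p j, embDomain_coeff]
  simp [frobenius_def]

lemma psi_coeff_of_not_dvd (x : LaurentSeries F) {k : ℤ} (hk : ¬ (p : ℤ) ∣ k) :
    (psi p F x).coeff k = 0 := by
  rw [psi, embDomain_notin_range]
  rintro ⟨j, rfl⟩
  exact hk ⟨j, rfl⟩

lemma psi_add (x y : LaurentSeries F) :
    psi p F (x + y) = psi p F x + psi p F y := by
  ext k
  by_cases hk : (p : ℤ) ∣ k
  · obtain ⟨j, rfl⟩ := hk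
    simp only [HahnSeries.coeff_add, psi_coeff_mul, add_pow_char]
  · simp [HahnSeries.coeff_add, psi_coeff_of_not_dvd p F _ hk]

lemma psi_single (a : ℤ) (c : F) :
    psi p F (HahnSeries.single a c) = HahnSeries.single ((p : ℤ) * a) (c ^ p) := by
  ext k
  by_cases hk : (p : ℤ) ∣ k
  · obtain ⟨j, rfl⟩ := hk
    rw [psi_coeff_mul]
    rcases eq_or_ne j a with rfl | hja
    · simp
    · rw [coeff_single_of_ne hja, coeff_single_of_ne (by
        simpa [mul_right_cancel₀ (show (p:ℤ) ≠ 0 by exact_mod_cast hp.out.ne_zero)] using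
          fun h : (p:ℤ)*j = (p:ℤ)*a => hja (by
            exact mul_left_cancel₀ (show (p:ℤ) ≠ 0 by exact_mod_cast hp.out.ne_zero) h))]
      exact zero_pow hp.out.ne_zero
  · rw [psi_coeff_of_not_dvd p F _ hk, coeff_single_of_ne]
    rintro rfl
    exact hk ⟨a, rfl⟩

lemma psi_coeff_ne_zero (x : LaurentSeries F) {k : ℤ} (h : (psi p F x).coeff k ≠ 0) :
    ∃ j : ℤ, k = (p : ℤ) * j ∧ x.coeff j ≠ 0 := by
  by_cases hk : (p : ℤ) ∣ k
  · obtain ⟨j, rfl⟩ := hk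
    refine ⟨j, rfl, fun hc => h ?_⟩
    rw [psi_coeff_mul, hc, zero_pow hp.out.ne_zero]
  · exact absurd (psi_coeff_of_not_dvd p F _ hk) h

theorem instCharPLS : CharP (LaurentSeries F) p :=
  charP_of_injective_ringHom (HahnSeries.C_injective.comp fun _ _ h => h) p

theorem pow_p_eq_psi (x : LaurentSeries F) : x ^ p = psi p F x := by
  haveI : CharP (LaurentSeries F) p := instCharPLS p F
  have hp0 : (0:ℤ) < (p : ℤ) := by exact_mod_cast hp.out.pos
  ext k
  set N : ℤ := max k 0 with hN
  have hkN : k ≤ N := le_max_left _ _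
  have hN0 : 0 ≤ N := le_max_right _ _
  have hsfin : {j : ℤ | x.coeff j ≠ 0 ∧ j ≤ N}.Finite := by
    refine (Set.finite_Icc x.order N).subset ?_
    rintro j ⟨hj, hjN⟩
    exact ⟨order_le_of_coeff_ne_zero hj, hjN⟩
  set t : Finset ℤ := hsfin.toFinset with ht
  set u : LaurentSeries F := ∑ j ∈ t, HahnSeries.single j (x.coeff j) with hu
  set v : LaurentSeries F := x - u with hv
  have hmem : ∀ j : ℤ, j ∈ t ↔ x.coeff j ≠ 0 ∧ j ≤ N := by
    intro j; rw [ht, Set.Finite.mem_toFinset]; rfl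
  have hco : ∀ i : ℤ, u.coeff i = ∑ j ∈ t, (HahnSeries.single j (x.coeff j)).coeff i := by
    intro i
    rw [hu, ← HahnSeries.coeff.addMonoidHom_apply, map_sum]
    rfl
  have hucoeff1 : ∀ i ∈ t, u.coeff i = x.coeff i := by
    intro i hit
    rw [hco, Finset.sum_eq_single_of_mem i hit
      (fun b _ hbi => coeff_single_of_ne fun h => hbi h.symm), coeff_single_same]
  have hucoeff0 : ∀ i : ℤ, i ∉ t → u.coeff i = 0 := by
    intro i hit
    rw [hco]
    refine Finset.sum_eq_zero fun b hb => coeff_single_of_ne ?_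
    rintro rfl
    exact hit hb
  have huN : ∀ i : ℤ, i ≤ N → u.coeff i = x.coeff i := by
    intro i hi
    by_cases hit : i ∈ t
    · exact hucoeff1 i hit
    · rw [hucoeff0 i hit]
      by_contra hne
      exact hit ((hmem i).2 ⟨fun h => hne h.symm, hi⟩)
  have hvcoeff : ∀ i : ℤ, i ≤ N → v.coeff i = 0 := by
    intro i hi
    rw [hv, HahnSeries.coeff_sub, huN i hi, sub_self]
  -- the finite part
  have hupart : u ^ p = psi p F u := by
    have psiHom : ∀ (s : Finset ℤ) (g : ℤ → LaurentSeries F),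
        psi p F (∑ j ∈ s, g j) = ∑ j ∈ s, psi p F (g j) := by
      intro s g
      classical
      induction s using Finset.induction with
      | empty =>
        simp only [Finset.sum_empty]
        have := psi_add p F 0 0
        simpa using this
      | insert _ _ hnot ih =>
        rw [Finset.sum_insert hnot, Finset.sum_insert hnot, psi_add p F, ih]
    rw [hu, sum_pow_char, psiHom]
    refine Finset.sum_congr rfl fun j _ => ?_
    rw [HahnSeries.single_pow, psi_single p F]
    norm_num
  -- the high-order part
  have hvsup : ∀ m : ℕ, 1 ≤ m → ∀ i : ℤ, (v ^ m).coeff i ≠ 0 → N < i := by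
    intro m
    induction m with
    | zero => intro h; exact absurd h (by omega)
    | succ m ih =>
      intro _ i hi
      rcases Nat.eq_or_lt_of_le (Nat.one_le_iff_ne_zero.mpr (Nat.succ_ne_zero m)) with h1 | h1
      · -- m = 0
        have hm : m = 0 := by omega
        subst hm
        rw [pow_one] at hi
        by_contra hle
        exact hi (hvcoeff i (by omega))
      · have hm1 : 1 ≤ m := by omega
        rw [pow_succ] at hi
        obtain ⟨a, ha, b, hb, rfl⟩ := support_mul_subset ((mem_support _ _).2 hi)
        have hNa : N < a := ih hm1 a ((mem_support _ _).1 ha)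
        have hNb : N < b := by
          by_contra hle
          exact ((mem_support _ _).1 hb) (hvcoeff b (by omega))
        show N < a + b
        omega
  have hvp : (v ^ p).coeff k = 0 := by
    by_contra h
    exact absurd (hvsup p hp.out.one_le k h) (by omega)
  have hpsiv : (psi p F v).coeff k = 0 := by
    by_cases hdvd : (p : ℤ) ∣ k
    · obtain ⟨j, rfl⟩ := hdvd
      rw [psi_coeff_mul p F _ _]
      have hjN : j ≤ N := by nlinarith
      rw [hvcoeff j hjN, zero_pow hp.out.ne_zero]
    · exact psi_coeff_of_not_dvd p F v hdvd
  have hx : x = u + v := by rw [hv]; ring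
  calc (x ^ p).coeff k = ((u + v) ^ p).coeff k := by rw [← hx]
    _ = (u ^ p).coeff k + (v ^ p).coeff k := by rw [add_pow_char, HahnSeries.coeff_add]
    _ = (psi p F u).coeff k + (psi p F v).coeff k := by rw [hupart, hvp, hpsiv]
    _ = (psi p F (u + v)).coeff k := by rw [psi_add p F, HahnSeries.coeff_add]
    _ = (psi p F x).coeff k := by rw [← hx]

lemma pow_coeff_mul (x : LaurentSeries F) (j : ℤ) :
    (x ^ p).coeff ((p : ℤ) * j) = (x.coeff j) ^ p := by
  rw [pow_p_eq_psi, psi_coeff_mul]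

lemma pow_coeff_ne_zero (x : LaurentSeries F) {k : ℤ} (h : (x ^ p).coeff k ≠ 0) :
    ∃ j : ℤ, k = (p : ℤ) * j ∧ x.coeff j ≠ 0 := by
  rw [pow_p_eq_psi] at h
  exact psi_coeff_ne_zero p F x h

open HahnSeries.SummableFamily in
/-- The family of `p`-th powers of a summable family. -/
def frobFam (S : SummableFamily ℤ F ℕ) : SummableFamily ℤ F ℕ where
  toFun i := (S i) ^ p
  isPWO_iUnion_support' := by
    refine ((S.isPWO_iUnion_support.image_of_monotone
      (f := fun k : ℤ => (p : ℤ) * k) ?_).mono ?_)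
    · intro a b hab
      exact mul_le_mul_of_nonneg_left hab (by positivity)
    · intro k hk
      obtain ⟨i, hk⟩ := Set.mem_iUnion.1 hk
      have hk' : ((S i) ^ p).coeff k ≠ 0 := hk
      obtain ⟨j, rfl, hj⟩ := pow_coeff_ne_zero p F (S i) hk'
      exact ⟨j, Set.mem_iUnion.2 ⟨i, hj⟩, rfl⟩
  finite_co_support' g := by
    by_cases hg : (p : ℤ) ∣ g
    · obtain ⟨j, rfl⟩ := hg
      refine (S.finite_co_support j).subset ?_
      intro i hi
      simp only [Set.mem_setOf_eq, pow_coeff_mul] at hi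
      simp only [Function.mem_support]
      exact fun h => hi (by rw [h, zero_pow hp.out.ne_zero])
    · convert Set.finite_empty
      refine Set.eq_empty_iff_forall_notMem.2 fun i hi => ?_
      have hi' : ((S i) ^ p).coeff g ≠ 0 := hi
      rw [pow_p_eq_psi, psi_coeff_of_not_dvd p F _ hg] at hi'
      exact hi' rfl

open HahnSeries.SummableFamily in
lemma hsum_frobFam (S : SummableFamily ℤ F ℕ) :
    (frobFam p F S).hsum = S.hsum ^ p := by
  ext k
  rw [pow_p_eq_psi]
  by_cases hk : (p : ℤ) ∣ k
  · obtain ⟨j, rfl⟩ := hk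
    rw [psi_coeff_mul, coeff_hsum, coeff_hsum]
    have hfin := S.finite_co_support j
    have h1 : (∑ᶠ i, (S i).coeff j) = ∑ i ∈ hfin.toFinset, (S i).coeff j :=
      finsum_eq_sum_of_support_subset _ (fun i hi => (Set.Finite.mem_toFinset hfin).2 hi)
    have h2 : (∑ᶠ i, ((frobFam p F S) i).coeff ((p:ℤ)*j))
        = ∑ i ∈ hfin.toFinset, ((frobFam p F S) i).coeff ((p:ℤ)*j) := by
      refine finsum_eq_sum_of_support_subset _ ?_
      intro i hi
      simp only [Function.mem_support] at hi
      have : (S i).coeff j ≠ 0 := by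
        intro h
        apply hi
        show ((S i) ^ p).coeff ((p:ℤ)*j) = 0
        rw [pow_coeff_mul, h, zero_pow hp.out.ne_zero]
      exact (Set.Finite.mem_toFinset hfin).2 this
    rw [h1, h2, sum_pow_char]
    refine Finset.sum_congr rfl fun i _ => ?_
    show ((S i) ^ p).coeff ((p:ℤ)*j) = _
    rw [pow_coeff_mul]
  · rw [psi_coeff_of_not_dvd p F _ hk, coeff_hsum]
    have : ∀ i : ℕ, ((frobFam p F S) i).coeff k = 0 := by
      intro i
      show ((S i) ^ p).coeff k = 0
      rw [pow_p_eq_psi, psi_coeff_of_not_dvd p F _ hk]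
    rw [finsum_congr this, finsum_zero]

open HahnSeries.SummableFamily in
/-- The family `i ↦ z ^ (m i)` for an injective `m`, where `z` has positive order. -/
def powFam (z : LaurentSeries F) (hz : 0 < z.orderTop) (m : ℕ → ℕ)
    (hm : Function.Injective m) : SummableFamily ℤ F ℕ where
  toFun i := z ^ (m i)
  isPWO_iUnion_support' := by
    refine (isPWO_iUnion_support_powers (zero_le_orderTop_iff.mp <| le_of_lt hz)).mono ?_
    exact Set.iUnion_subset fun i => Set.subset_iUnion (fun n => (z ^ n).support) (m i)
  finite_co_support' g := by
    have hfin := pow_finite_co_support hz g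
    have : {i : ℕ | (z ^ (m i)).coeff g ≠ 0} ⊆ m ⁻¹' {n : ℕ | (z ^ n).coeff g ≠ 0} := by
      intro i hi
      simpa using hi
    exact ((hfin.preimage hm.injOn).subset this)

open HahnSeries.SummableFamily in
lemma hsum_congr_toFun (S T : SummableFamily ℤ F ℕ) (h : ∀ i, S i = T i) :
    S.hsum = T.hsum := by
  ext k
  rw [coeff_hsum, coeff_hsum]
  exact finsum_congr fun i => by rw [h i]

open HahnSeries.SummableFamily in
/-- Artin–Schreier surjectivity in positive order. -/
theorem exists_AS_of_pos_orderTop (z : LaurentSeries F) (hz : 0 < z.orderTop) :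
    ∃ y : LaurentSeries F, y ^ p - y = z := by
  haveI : CharP (LaurentSeries F) p := instCharPLS p F
  have h2 : 2 ≤ p := hp.out.two_le
  set S : SummableFamily ℤ F ℕ := powFam F z hz (fun i => p ^ i)
    (Nat.pow_right_injective h2) with hS
  set S' : SummableFamily ℤ F ℕ := powFam F z hz (fun i => p ^ (i + 1))
    (fun a b h => Nat.succ_injective (Nat.pow_right_injective h2 h)) with hS'
  have h1 : (frobFam p F S).hsum = S'.hsum := by
    refine hsum_congr_toFun F _ _ fun i => ?_
    show (z ^ (p ^ i)) ^ p = z ^ (p ^ (i + 1))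
    rw [← pow_mul, pow_succ]
  have hsplit : S.hsum = z + S'.hsum := by
    set e0 : Unit ↪ ℕ := ⟨fun _ => 0, fun _ _ _ => rfl⟩ with he0
    set esucc : ℕ ↪ ℕ := ⟨Nat.succ, Nat.succ_injective⟩ with hesucc
    have hfam : S = (SummableFamily.single () z).embDomain e0 + S'.embDomain esucc := by
      refine SummableFamily.ext fun i => ?_
      cases i with
      | zero =>
        have hA : ((SummableFamily.single () z).embDomain e0) 0 = z := by
          have := embDomain_image (SummableFamily.single () z) e0 (a := ())
          exact this.trans (by simp)
        have hB : (S'.embDomain esucc) 0 = 0 := by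
          refine embDomain_notin_range _ _ ?_
          rintro ⟨i, hi⟩
          exact Nat.succ_ne_zero i hi
        rw [SummableFamily.add_apply, hA, hB, add_zero]
        show z ^ (p ^ 0) = z
        rw [pow_zero, pow_one]
      | succ i =>
        have hA : ((SummableFamily.single () z).embDomain e0) (i + 1) = 0 := by
          refine embDomain_notin_range _ _ ?_
          rintro ⟨⟨⟩, hi⟩
          exact (Nat.succ_ne_zero i) hi.symm
        have hB : (S'.embDomain esucc) (i + 1) = S' i := by
          have := embDomain_image S' esucc (a := i)
          simpa [hesucc] using this
        rw [SummableFamily.add_apply, hA, hB, zero_add]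
        rfl
    rw [hfam, hsum_add, hsum_embDomain, hsum_embDomain, hsum_single]
  refine ⟨-S.hsum, ?_⟩
  have hneg : (-S.hsum) ^ p = -(S.hsum ^ p) := by
    have := map_neg (frobenius (LaurentSeries F) p) (S.hsum)
    rwa [frobenius_def, frobenius_def] at this
  rw [hneg, sub_neg_eq_add, ← hsum_frobFam, h1]
  rw [hsplit]
  ring

/-- A nonzero element of the Artin–Schreier range with negative order has order divisible
by `p`. -/
lemma order_dvd_of_AS (x : LaurentSeries F) (hx : x ≠ 0) (hord : x.order < 0)
    (h : ∃ z : LaurentSeries F, z ^ p - z = x) : (p : ℤ) ∣ x.order := by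
  obtain ⟨z, hz⟩ := h
  have hz0 : z ≠ 0 := by
    rintro rfl
    rw [zero_pow hp.out.ne_zero, sub_zero] at hz
    exact hx hz.symm
  have hzp0 : z ^ p ≠ 0 := pow_ne_zero _ hz0
  have hordp : (z ^ p).order = (p : ℤ) * z.order := by
    rw [HahnSeries.order_pow, nsmul_eq_mul]
  have h2 : (2 : ℤ) ≤ (p : ℤ) := by exact_mod_cast hp.out.two_le
  rcases lt_or_ge z.order 0 with ho | ho
  · -- z has negative order; then x.order = p * z.order
    have hlt : (p : ℤ) * z.order < z.order := by nlinarith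
    have hcoeff : x.coeff ((p : ℤ) * z.order) ≠ 0 := by
      rw [← hz, HahnSeries.coeff_sub,
        HahnSeries.coeff_eq_zero_of_lt_order (x := z) (by rw [← hordp] at hlt ⊢; omega),
        sub_zero, ← hordp]
      exact (coeff_order_eq_zero.not.mpr hzp0)
    have hsmall : ∀ i : ℤ, i < (p : ℤ) * z.order → x.coeff i = 0 := by
      intro i hi
      rw [← hz, HahnSeries.coeff_sub,
        HahnSeries.coeff_eq_zero_of_lt_order (x := z ^ p) (by omega),
        HahnSeries.coeff_eq_zero_of_lt_order (x := z) (by omega), sub_zero]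
    have hxo : x.order = (p : ℤ) * z.order := by
      have hle : x.order ≤ (p : ℤ) * z.order := order_le_of_coeff_ne_zero hcoeff
      rcases lt_or_eq_of_le hle with hlt' | heq
      · exact absurd (hsmall _ hlt') ((coeff_order_eq_zero.not.mpr hx))
      · exact heq
    exact ⟨z.order, hxo⟩
  · -- z has nonnegative order; then x has nonnegative order, contradiction
    exfalso
    have hco : x.coeff x.order ≠ 0 := (coeff_order_eq_zero.not.mpr hx)
    obtain ⟨o, hoeq⟩ : ∃ o : ℤ, o = x.order := ⟨_, rfl⟩
    rw [← hoeq] at hco hord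
    have h1 : z.coeff o = 0 := HahnSeries.coeff_eq_zero_of_lt_order (by omega)
    have h2' : (z ^ p).coeff o = 0 := by
      refine HahnSeries.coeff_eq_zero_of_lt_order ?_
      rw [hordp]
      nlinarith
    rw [← hz, HahnSeries.coeff_sub, h1, h2', sub_zero] at hco
    exact hco rfl

end AS

open HahnSeries

/-- **`K/℘(K)` is countably infinite for `K = 𝔽_q((ϖ))`.**
Let `p` be a prime, `q = p^f`, and `K = 𝔽_q((ϖ))` the field of formal Laurent series over
the finite field with `q` elements.  The image `℘(K) = {y^p - y : y ∈ K}` of the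
Artin–Schreier map is an additive subgroup of `K`, and the quotient group `K/℘(K)` is
countably infinite. -/
theorem artin_schreier_quotient_countably_infinite
    (p f : ℕ) [hp : Fact p.Prime] (hf : f ≠ 0)
    (F : Type*) [Field F] [Fintype F] (hcard : Fintype.card F = p ^ f) :
    ∃ W : AddSubgroup (LaurentSeries F),
      (W : Set (LaurentSeries F)) = Set.range (fun y : LaurentSeries F => y ^ p - y) ∧
      Countable (LaurentSeries F ⧸ W) ∧ Infinite (LaurentSeries F ⧸ W) := by
  classical
  -- `F` has characteristic `p`
  haveI hFp : CharP F p := by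
    have hq : ((Fintype.card F : ℕ) : F) = 0 := FiniteField.cast_card_eq_zero F
    rw [hcard] at hq
    push_cast at hq
    have hp0 : (p : F) = 0 := by
      have := pow_eq_zero_iff hf |>.mp hq
      exact this
    have hdvd : ringChar F ∣ p := ringChar.dvd hp0
    have hchar : ringChar F = p := by
      rcases (Nat.Prime.eq_one_or_self_of_dvd hp.out _ hdvd) with h1 | h
      · exfalso
        haveI := ringChar.charP F
        rw [h1] at this
        have h10 : ((1 : ℕ) : F) = 0 := CharP.cast_eq_zero F 1
        rw [Nat.cast_one] at h10
        exact one_ne_zero h10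
      · exact h
    rw [← hchar]
    exact ringChar.charP F
  haveI hKp : CharP (LaurentSeries F) p := instCharPLS p F
  have hfrobneg : ∀ w : LaurentSeries F, (-w) ^ p = -(w ^ p) := by
    intro w
    have := map_neg (frobenius (LaurentSeries F) p) w
    rwa [frobenius_def, frobenius_def] at this
  set W : AddSubgroup (LaurentSeries F) :=
    { carrier := Set.range (fun y : LaurentSeries F => y ^ p - y)
      zero_mem' := ⟨0, by simp [zero_pow hp.out.ne_zero]⟩
      add_mem' := by
        rintro _ _ ⟨a, rfl⟩ ⟨b, rfl⟩
        exact ⟨a + b, by simp only; rw [add_pow_char]; ring⟩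
      neg_mem' := by
        rintro _ ⟨a, rfl⟩
        exact ⟨-a, by simp only; rw [hfrobneg]; ring⟩ } with hW
  have hmemW : ∀ x : LaurentSeries F, x ∈ W ↔ ∃ y : LaurentSeries F, y ^ p - y = x := by
    intro x
    rw [hW]
    exact ⟨fun ⟨y, hy⟩ => ⟨y, hy⟩, fun ⟨y, hy⟩ => ⟨y, hy⟩⟩
  refine ⟨W, rfl, ?_, ?_⟩
  · -- countability
    have hsurj : Function.Surjective (fun l : List (ℤ × F) =>
        (QuotientAddGroup.mk
          ((l.map fun jc => (HahnSeries.single jc.1 jc.2 : LaurentSeries F)).sum) :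
          LaurentSeries F ⧸ W)) := by
      intro q
      obtain ⟨x, rfl⟩ := QuotientAddGroup.mk_surjective q
      have hsfin : {j : ℤ | x.coeff j ≠ 0 ∧ j ≤ 0}.Finite := by
        refine (Set.finite_Icc x.order 0).subset ?_
        rintro j ⟨hj, hjN⟩
        exact ⟨order_le_of_coeff_ne_zero hj, hjN⟩
      set t : Finset ℤ := hsfin.toFinset with ht
      set u : LaurentSeries F := ∑ j ∈ t, HahnSeries.single j (x.coeff j) with hu
      set v : LaurentSeries F := x - u with hv
      have hmem : ∀ j : ℤ, j ∈ t ↔ x.coeff j ≠ 0 ∧ j ≤ 0 := by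
        intro j; rw [ht, Set.Finite.mem_toFinset]; rfl
      have hco : ∀ i : ℤ, u.coeff i = ∑ j ∈ t, (HahnSeries.single j (x.coeff j)).coeff i := by
        intro i
        rw [hu, ← HahnSeries.coeff.addMonoidHom_apply, map_sum]
        rfl
      have hvcoeff : ∀ i : ℤ, i ≤ 0 → v.coeff i = 0 := by
        intro i hi
        rw [hv, HahnSeries.coeff_sub]
        by_cases hit : i ∈ t
        · rw [hco, Finset.sum_eq_single_of_mem i hit
            (fun b _ hbi => coeff_single_of_ne fun h => hbi h.symm), coeff_single_same, sub_self]
        · have hu0 : u.coeff i = 0 := by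
            rw [hco]
            refine Finset.sum_eq_zero fun b hb => coeff_single_of_ne ?_
            rintro rfl
            exact hit hb
          have hx0 : x.coeff i = 0 := by
            by_contra hne
            exact hit ((hmem i).2 ⟨hne, hi⟩)
          rw [hu0, hx0, sub_zero]
      have hvord : 0 < v.orderTop := by
        rcases eq_or_ne v 0 with hv0 | hv0
        · rw [hv0, orderTop_zero]
          exact_mod_cast WithTop.coe_lt_top (0 : ℤ)
        · rw [← order_eq_orderTop_of_ne_zero hv0]
          have h0 : 0 < v.order := by
            by_contra hle
            push_neg at hle
            exact ((coeff_order_eq_zero.not.mpr hv0)) (hvcoeff _ hle)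
          exact WithTop.coe_lt_coe.mpr h0
      obtain ⟨y, hy⟩ := exists_AS_of_pos_orderTop p F v hvord
      refine ⟨t.toList.map (fun j => (j, x.coeff j)), ?_⟩
      have hlsum : (((t.toList.map (fun j => (j, x.coeff j))).map
          fun jc => (HahnSeries.single jc.1 jc.2 : LaurentSeries F)).sum) = u := by
        rw [List.map_map]
        exact Finset.sum_map_toList t (fun j => HahnSeries.single j (x.coeff j))
      simp only [hlsum]
      rw [QuotientAddGroup.eq]
      rw [neg_add_eq_sub]
      exact (hmemW _).2 ⟨y, by rw [hy, hv]⟩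
    haveI : Countable (List (ℤ × F)) := inferInstance
    exact hsurj.countable
  · -- infiniteness
    refine Infinite.of_injective (fun n : ℕ =>
      (QuotientAddGroup.mk (HahnSeries.single (-((n : ℤ) * p + 1)) (1 : F)) :
        LaurentSeries F ⧸ W)) ?_
    intro n m hnm
    by_contra hne
    have hpZ : (0 : ℤ) < (p : ℤ) := by exact_mod_cast hp.out.pos
    set a : ℤ := -((m : ℤ) * p + 1) with ha
    set b : ℤ := -((n : ℤ) * p + 1) with hb
    have hab : a ≠ b := by
      intro h
      apply hne
      have hmul : (n : ℤ) * p = (m : ℤ) * p := by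
        rw [ha, hb] at h
        linarith
      have := mul_right_cancel₀ (ne_of_gt hpZ) hmul
      exact_mod_cast this
    rw [QuotientAddGroup.eq, neg_add_eq_sub] at hnm
    set d : LaurentSeries F := HahnSeries.single a 1 - HahnSeries.single b 1 with hd
    have hd0 : d ≠ 0 := by
      intro h
      have : d.coeff a = 0 := by rw [h]; rfl
      rw [hd, HahnSeries.coeff_sub, coeff_single_same, coeff_single_of_ne hab, sub_zero] at this
      exact one_ne_zero this
    have horder : d.order = a ∨ d.order = b := by
      have hcd : d.coeff d.order ≠ 0 := (coeff_order_eq_zero.not.mpr hd0)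
      by_contra hcon
      push_neg at hcon
      rw [hd, HahnSeries.coeff_sub, coeff_single_of_ne hcon.1, coeff_single_of_ne hcon.2,
        sub_zero] at hcd
      exact hcd rfl
    have hmn : (0:ℤ) ≤ (m : ℤ) * p := by positivity
    have hnn : (0:ℤ) ≤ (n : ℤ) * p := by positivity
    have hordneg : d.order < 0 := by
      rcases horder with h | h <;> rw [h]
      · rw [ha]; linarith
      · rw [hb]; linarith
    have hdvd : (p : ℤ) ∣ d.order := order_dvd_of_AS p F d hd0 hordneg ((hmemW d).1 hnm)
    have hnotdvd : ¬ (p : ℤ) ∣ d.order := by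
      rcases horder with h | h <;> rw [h] <;> intro hdd
      · rw [ha] at hdd
        rw [Int.dvd_neg] at hdd
        have h1 : (p : ℤ) ∣ 1 := (Int.dvd_add_right ⟨(m : ℤ), mul_comm _ _⟩).mp hdd
        have h2 : (p : ℤ) ≤ 1 := Int.le_of_dvd one_pos h1
        have h3 : (2 : ℤ) ≤ (p : ℤ) := by exact_mod_cast hp.out.two_le
        linarith
      · rw [hb] at hdd
        rw [Int.dvd_neg] at hdd
        have h1 : (p : ℤ) ∣ 1 := (Int.dvd_add_right ⟨(n : ℤ), mul_comm _ _⟩).mp hdd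
        have h2 : (p : ℤ) ≤ 1 := Int.le_of_dvd one_pos h1
        have h3 : (2 : ℤ) ≤ (p : ℤ) := by exact_mod_cast hp.out.two_le
        linarith
    exact hnotdvd hdvd
end

section
/- Let p be a prime, q = p^f, and K = 𝔽_q((ϖ)) the field of formal Laurent series over the finite field 𝔽_q with q elements. Then there is a group isomorphism between the quotient K^×/(K^×)^p of the multiplicative group of K by its subgroup of p-th powers and the direct product ∏_{n∈ℕ} ℤ/pℤ of countably many copies of ℤ/pℤ. In particular K^×/(K^×)^p is an infinite abelian group annihilated by p. -/
set_option maxHeartbeats 1000000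

open Cardinal

section Aux

variable {F : Type*} [Field F] {p : ℕ}

private lemma aux_coeff_pow_ps (hp : p.Prime) [CharP F p]
    (u : PowerSeries F) {m : ℕ} (hm : ¬ p ∣ m) : PowerSeries.coeff m (u ^ p) = 0 := by
  have hm0 : m ≠ 0 := fun h => hm (h ▸ dvd_zero p)
  obtain ⟨n, rfl⟩ : ∃ n, m = n + 1 :=
    ⟨m - 1, (Nat.succ_pred_eq_of_pos (Nat.pos_of_ne_zero hm0)).symm⟩
  have hD : PowerSeries.derivative F (u ^ p) = 0 := by
    rw [Derivation.leibniz_pow, nsmul_eq_mul]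
    have hzero : ((p : ℕ) : PowerSeries F) = 0 := by
      rw [← map_natCast (PowerSeries.C (R := F)) p, CharP.cast_eq_zero F p, map_zero]
    rw [hzero, zero_mul]
  have h := PowerSeries.coeff_derivative (u ^ p) n
  rw [hD, map_zero] at h
  have hcast : (((n : F) + 1)) ≠ 0 := by
    have h1 : ((n + 1 : ℕ) : F) ≠ 0 := by
      rw [Ne, CharP.cast_eq_zero_iff F p]
      exact hm
    simpa using h1
  exact (mul_eq_zero.mp h.symm).resolve_right hcast

private lemma aux_coe_coeff_neg (u : PowerSeries F) {n : ℤ} (hn : n < 0) :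
    (HahnSeries.ofPowerSeries ℤ F u).coeff n = 0 := by
  rw [HahnSeries.ofPowerSeries_apply, HahnSeries.embDomain_notin_range]
  intro h
  simp only [Set.mem_range, RelEmbedding.coe_mk, Function.Embedding.coeFn_mk] at h
  obtain ⟨m, hm⟩ := h
  have hm' : (m : ℤ) = n := hm
  omega

private lemma aux_coeff_pow (hp : p.Prime) [CharP F p]
    (g : LaurentSeries F) {n : ℤ} (hn : ¬ (p : ℤ) ∣ n) : (g ^ p).coeff n = 0 := by
  rcases eq_or_ne g 0 with rfl | hg
  · rw [zero_pow hp.ne_zero]; simp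
  · conv_lhs => rw [← g.single_order_mul_powerSeriesPart]
    rw [mul_pow, HahnSeries.single_pow, one_pow, ← map_pow]
    have hsplit : n = (n - p • g.order) + p • g.order := (sub_add_cancel n _).symm
    rw [hsplit, HahnSeries.coeff_single_mul_add, one_mul]
    rcases lt_or_ge (n - p • g.order) 0 with hlt | hle
    · exact aux_coe_coeff_neg _ hlt
    · obtain ⟨k, hk⟩ := Int.eq_ofNat_of_zero_le hle
      rw [hk, HahnSeries.ofPowerSeries_apply_coeff]
      refine aux_coeff_pow_ps hp _ ?_
      intro hdvd
      apply hn
      have h1 : (p : ℤ) ∣ (k : ℤ) := Int.natCast_dvd_natCast.mpr hdvd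
      have h2 : (p : ℤ) ∣ p • g.order := by
        rw [nsmul_eq_mul]; exact Dvd.intro _ rfl
      calc (p : ℤ) ∣ (n - p • g.order) + p • g.order := dvd_add (hk ▸ h1) h2
        _ = n := hsplit.symm

end Aux

section Construction

variable (F : Type*) [Field F] (p : ℕ)

private noncomputable def auxY (s : Set ℕ) : LaurentSeries F :=
  HahnSeries.ofPowerSeries ℤ F
    (PowerSeries.mk ({n : ℕ | ∃ m ∈ s, n = p * m + 1}.indicator fun _ => (1 : F)))

private noncomputable def auxX (s : Set ℕ) : LaurentSeries F := 1 + auxY F p s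

variable {F p}

private lemma auxY_coeff_nat (s : Set ℕ) (k : ℕ) :
    (auxY F p s).coeff (k : ℤ) =
      ({n : ℕ | ∃ m ∈ s, n = p * m + 1}.indicator (fun _ => (1 : F)) k) := by
  rw [auxY, HahnSeries.ofPowerSeries_apply_coeff, PowerSeries.coeff_mk]

private lemma auxY_support (s : Set ℕ) :
    (auxY F p s).support ⊆ {j : ℤ | ∃ m : ℕ, j = ((p * m + 1 : ℕ) : ℤ)} := by
  intro j hj
  rcases lt_or_ge j 0 with hneg | hpos
  · exact absurd (aux_coe_coeff_neg _ hneg) hj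
  · obtain ⟨k, rfl⟩ := Int.eq_ofNat_of_zero_le hpos
    rw [HahnSeries.mem_support, auxY_coeff_nat] at hj
    by_cases hk : k ∈ {n : ℕ | ∃ m ∈ s, n = p * m + 1}
    · obtain ⟨m, _, rfl⟩ := hk
      exact ⟨m, rfl⟩
    · rw [Set.indicator_of_notMem hk] at hj
      exact absurd rfl hj

private lemma auxX_coeff_special (hp0 : 0 < p) (s : Set ℕ) (m : ℕ) :
    (auxX F p s).coeff ((p * m + 1 : ℕ) : ℤ) = s.indicator (fun _ => (1 : F)) m := by
  rw [auxX, HahnSeries.coeff_add, HahnSeries.coeff_one,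
    if_neg (by omega : ¬ ((p * m + 1 : ℕ) : ℤ) = 0), auxY_coeff_nat, zero_add]
  by_cases hm : m ∈ s
  · rw [Set.indicator_of_mem (show p * m + 1 ∈ {n : ℕ | ∃ m' ∈ s, n = p * m' + 1} from
      ⟨m, hm, rfl⟩), Set.indicator_of_mem hm]
  · rw [Set.indicator_of_notMem, Set.indicator_of_notMem hm]
    rintro ⟨m', hm', he⟩
    have : m' = m := Nat.eq_of_mul_eq_mul_left hp0 (by omega)
    exact hm (this ▸ hm')

private lemma auxX_ne_zero (s : Set ℕ) : auxX F p s ≠ 0 := by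
  intro h
  have h0 : (auxX F p s).coeff 0 = 1 := by
    rw [auxX, HahnSeries.coeff_add, HahnSeries.coeff_one, if_pos rfl]
    have h00 : ((0 : ℕ) : ℤ) = (0 : ℤ) := rfl
    rw [← h00, auxY_coeff_nat, Set.indicator_of_notMem, add_zero]
    rintro ⟨m, _, hm⟩
    omega
  rw [h] at h0
  simp at h0

private lemma aux_key (hp : p.Prime) [CharP F p] {s t : Set ℕ}
    (h : ∃ g : LaurentSeries F, g ^ p * auxX F p t = auxX F p s) : s = t := by
  obtain ⟨g, heq⟩ := h
  have hprod : ∀ k : ℤ, (p : ℤ) ∣ k → (g ^ p * auxY F p t).coeff k = 0 := by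
    intro k hk
    by_contra hne
    have hmem : k ∈ (g ^ p * auxY F p t).support := hne
    obtain ⟨i, hi, j, hj, hij⟩ := Set.mem_add.mp (HahnSeries.support_mul_subset hmem)
    have hpi : (p : ℤ) ∣ i := by
      by_contra hni
      exact hi (aux_coeff_pow hp g hni)
    obtain ⟨m, rfl⟩ := auxY_support t hj
    have hdvd1 : (p : ℤ) ∣ ((p * m + 1 : ℕ) : ℤ) := by
      have hsub : ((p * m + 1 : ℕ) : ℤ) = k - i := eq_sub_of_add_eq' hij
      rw [hsub]
      exact dvd_sub hk hpi
    rw [Int.natCast_dvd_natCast] at hdvd1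
    have hone : p ∣ 1 := (Nat.dvd_add_right ⟨m, rfl⟩).mp hdvd1
    exact hp.one_lt.ne' (Nat.dvd_one.mp hone)
  have hYdvd : ∀ (w : Set ℕ) (k : ℤ), (p : ℤ) ∣ k → (auxY F p w).coeff k = 0 := by
    intro w k hk
    by_contra hne
    obtain ⟨m, hm⟩ := auxY_support w hne
    subst hm
    rw [Int.natCast_dvd_natCast] at hk
    have hone : p ∣ 1 := (Nat.dvd_add_right ⟨m, rfl⟩).mp hk
    exact hp.one_lt.ne' (Nat.dvd_one.mp hone)
  have hgp : g ^ p = 1 := by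
    ext n
    rcases Decidable.em ((p : ℤ) ∣ n) with hdvd | hndvd
    · have h1 := congrArg (fun x => HahnSeries.coeff x n) heq
      rw [auxX, auxX, mul_add, mul_one, HahnSeries.coeff_add, HahnSeries.coeff_add,
        hprod n hdvd, hYdvd s n hdvd, add_zero, add_zero] at h1
      exact h1
    · rw [aux_coeff_pow hp g hndvd, HahnSeries.coeff_one, if_neg]
      intro h0
      exact hndvd (h0 ▸ dvd_zero _)
  rw [hgp, one_mul] at heq
  ext m
  have hc := congrArg (fun x => HahnSeries.coeff x ((p * m + 1 : ℕ) : ℤ)) heq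
  rw [auxX_coeff_special hp.pos, auxX_coeff_special hp.pos] at hc
  by_cases hms : m ∈ s <;> by_cases hmt : m ∈ t <;>
    simp [hms, hmt] at hc ⊢

end Construction

private lemma aux_rank_eq {K : Type} [Field K] [Finite K] (V : Type*) [AddCommGroup V]
    [Module K V] [Infinite V] : Module.rank K V = #V := by
  obtain ⟨⟨ι, b⟩⟩ := Module.Free.exists_basis (R := K) (M := V)
  haveI : Infinite ι := by
    by_contra hfin
    rw [not_infinite_iff_finite] at hfin
    haveI : Finite (ι →₀ K) := by
      haveI := Fintype.ofFinite ι
      haveI := Fintype.ofFinite K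
      haveI := Classical.decEq ι
      infer_instance
    haveI : Finite V := Finite.of_equiv _ b.repr.toEquiv.symm
    exact not_finite V
  rw [← b.mk_eq_rank'', b.repr.toEquiv.cardinal_eq, mk_finsupp_lift_of_infinite,
    Cardinal.lift_uzero,
    max_eq_left ((Cardinal.lift_lt_aleph0.mpr (Cardinal.lt_aleph0_of_finite K)).le.trans
      (Cardinal.aleph0_le_mk ι))]

/-- Every subgroup of the commutative group `(LaurentSeries F)ˣ` is normal.
(Stated as an instance so that the quotient group below carries its group structure.) -/
instance laurentSeries_units_subgroup_normal (F : Type*) [Field F]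
    (P : Subgroup (LaurentSeries F)ˣ) : P.Normal :=
  Subgroup.normal_of_comm P

/-- **`K^×/(K^×)^p ≅ ∏_{n∈ℕ} ℤ/pℤ` for `K = 𝔽_q((ϖ))`.**
Let `p` be a prime, `q = p^f`, and `K = 𝔽_q((ϖ))` the field of formal Laurent series over
the finite field with `q` elements.  Then the quotient of `K^×` by its subgroup `P` of
`p`-th powers is isomorphic, as a group, to the direct product of countably many copies of
`ℤ/pℤ`; in particular it is an infinite abelian group annihilated by `p`. -/
theorem units_mod_pth_powers_iso_prod
    (p f : ℕ) [hp : Fact p.Prime] (hf : f ≠ 0)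
    (F : Type*) [Field F] [Fintype F] (hcard : Fintype.card F = p ^ f)
    (P : Subgroup (LaurentSeries F)ˣ)
    (hP : ∀ x : (LaurentSeries F)ˣ, x ∈ P ↔ ∃ y : (LaurentSeries F)ˣ, y ^ p = x) :
    Nonempty (((LaurentSeries F)ˣ ⧸ P) ≃* (ℕ → Multiplicative (ZMod p))) ∧
    Infinite ((LaurentSeries F)ˣ ⧸ P) ∧
    (∀ x : (LaurentSeries F)ˣ ⧸ P, x ^ p = 1) := by
  classical
  have hpp := hp.out
  haveI : NeZero p := ⟨hpp.pos.ne'⟩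
  haveI hchar : CharP F p := by
    obtain ⟨n, hrp, hcard'⟩ := FiniteField.card F (ringChar F)
    have hpr : p = ringChar F := by
      have hdvd : p ∣ ringChar F ^ (n : ℕ) := by
        rw [← hcard', hcard]
        exact dvd_pow_self p hf
      exact (Nat.prime_dvd_prime_iff_eq hpp hrp).mp (hpp.dvd_of_dvd_pow hdvd)
    rw [hpr]; exact ringChar.charP F
  -- annihilated by p
  have hann : ∀ x : (LaurentSeries F)ˣ ⧸ P, x ^ p = 1 := by
    intro x
    refine QuotientGroup.induction_on x ?_
    intro u
    rw [← QuotientGroup.mk_pow, QuotientGroup.eq_one_iff]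
    exact (hP _).mpr ⟨u, rfl⟩
  -- injection of Set ℕ
  let Φ : Set ℕ → (LaurentSeries F)ˣ ⧸ P := fun s =>
    QuotientGroup.mk (Units.mk0 (auxX F p s) (auxX_ne_zero s))
  have hΦ : Function.Injective Φ := by
    intro s t hst
    rw [QuotientGroup.eq] at hst
    obtain ⟨y, hy⟩ := (hP _).mp hst
    have hyy : ((y : (LaurentSeries F)ˣ) : LaurentSeries F) ^ p * auxX F p s = auxX F p t := by
      have h2 : (Units.mk0 (auxX F p s) (auxX_ne_zero s)) * y ^ p
          = Units.mk0 (auxX F p t) (auxX_ne_zero t) := by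
        rw [hy, mul_inv_cancel_left]
      have h3 := congrArg Units.val h2
      rw [Units.val_mul, Units.val_pow_eq_pow_val, Units.val_mk0, Units.val_mk0,
        mul_comm] at h3
      exact h3
    have h4 : t = s := aux_key hpp ⟨((y : (LaurentSeries F)ˣ) : LaurentSeries F), hyy⟩
    exact h4.symm
  haveI hinf : Infinite ((LaurentSeries F)ˣ ⧸ P) :=
    Infinite.of_injective (Φ ∘ fun n : ℕ => ({n} : Set ℕ))
      (hΦ.comp Set.singleton_injective)
  -- cardinality
  have hup : #((LaurentSeries F)ˣ ⧸ P) ≤ (2 : Cardinal) ^ (ℵ₀ : Cardinal) := by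
    have h1 : #((LaurentSeries F)ˣ ⧸ P) ≤ #((LaurentSeries F)ˣ) :=
      Cardinal.mk_le_of_surjective QuotientGroup.mk_surjective
    have h2 : #((LaurentSeries F)ˣ) ≤ #(LaurentSeries F) :=
      Cardinal.mk_le_of_injective Units.val_injective
    have h3 : #(LaurentSeries F) ≤ #(ℤ → F) :=
      Cardinal.mk_le_of_injective HahnSeries.coeff_injective
    have h4 : #(ℤ → F) = (2 : Cardinal) ^ (ℵ₀ : Cardinal) := by
      rw [Cardinal.mk_arrow, Cardinal.mk_fintype F, hcard, Cardinal.mk_int,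
        Cardinal.lift_natCast, Cardinal.lift_aleph0]
      exact Cardinal.nat_power_eq le_rfl (hpp.two_le.trans (Nat.le_self_pow hf p))
    exact ((h1.trans h2).trans h3).trans_eq h4
  have hlow : (2 : Cardinal) ^ (ℵ₀ : Cardinal) ≤ #((LaurentSeries F)ˣ ⧸ P) := by
    have h1 := Cardinal.lift_mk_le'.mpr ⟨⟨Φ, hΦ⟩⟩
    rw [Cardinal.mk_set, Cardinal.mk_nat] at h1
    simpa using h1
  have hQ2 : #((LaurentSeries F)ˣ ⧸ P) = (2 : Cardinal) ^ (ℵ₀ : Cardinal) :=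
    le_antisymm hup hlow
  -- module structures
  letI hcg : CommGroup ((LaurentSeries F)ˣ ⧸ P) :=
    { (inferInstance : Group ((LaurentSeries F)ˣ ⧸ P)) with
      mul_comm := fun a b => by
        refine QuotientGroup.induction_on a ?_
        intro x
        refine QuotientGroup.induction_on b ?_
        intro y
        rw [← QuotientGroup.mk_mul, ← QuotientGroup.mk_mul]
        exact congrArg QuotientGroup.mk (mul_comm x y) }
  haveI : Module (ZMod p) (Additive ((LaurentSeries F)ˣ ⧸ P)) :=
    AddCommGroup.zmodModule (n := p) (G := Additive ((LaurentSeries F)ˣ ⧸ P)) (by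
      intro x
      have hx := hann (Additive.toMul x)
      have h2 : Additive.ofMul (Additive.toMul x ^ p) = Additive.ofMul 1 :=
        congrArg Additive.ofMul hx
      rw [ofMul_pow] at h2
      simpa using h2)
  haveI : Infinite (Additive ((LaurentSeries F)ˣ ⧸ P)) :=
    Infinite.of_injective Additive.ofMul (Equiv.injective _)
  have hr1 : Module.rank (ZMod p) (Additive ((LaurentSeries F)ˣ ⧸ P))
      = #((LaurentSeries F)ˣ ⧸ P) := by
    rw [aux_rank_eq]
    exact Cardinal.mk_congr Additive.toMul
  have hr2 : Module.rank (ZMod p) (ℕ → ZMod p) = #(ℕ → ZMod p) := rank_fun_infinite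
  have h5 : #(ℕ → ZMod p) = (2 : Cardinal) ^ (ℵ₀ : Cardinal) := by
    rw [Cardinal.mk_arrow, Cardinal.mk_fintype, ZMod.card, Cardinal.mk_nat]
    simp only [Cardinal.lift_natCast, Cardinal.lift_aleph0, Cardinal.lift_id]
    exact Cardinal.nat_power_eq le_rfl hpp.two_le
  have hequiv : Nonempty
      ((Additive ((LaurentSeries F)ˣ ⧸ P)) ≃ₗ[ZMod p] (ℕ → ZMod p)) := by
    refine nonempty_linearEquiv_of_lift_rank_eq ?_
    rw [hr1, hr2, hQ2, h5]
    simp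
  obtain ⟨e⟩ := hequiv
  let eF : ((LaurentSeries F)ˣ ⧸ P) → (ℕ → ZMod p) := fun x => e (Additive.ofMul x)
  let eG : (ℕ → ZMod p) → ((LaurentSeries F)ˣ ⧸ P) := fun v => Additive.toMul (e.symm v)
  have heFG : ∀ x, eG (eF x) = x := fun x => by simp [eF, eG]
  have heGF : ∀ v, eF (eG v) = v := fun v => by simp [eF, eG]
  have heMul : ∀ x y, eF (x * y) = eF x + eF y := fun x y => by
    simp only [eF]
    rw [ofMul_mul, map_add]
  refine ⟨⟨{ toFun := fun x n => Multiplicative.ofAdd (eF x n)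
             invFun := fun g => eG (fun n => Multiplicative.toAdd (g n))
             left_inv := fun x => by simpa using heFG x
             right_inv := fun g => by
               funext n
               show Multiplicative.ofAdd (eF (eG fun k => Multiplicative.toAdd (g k)) n) = g n
               rw [congrFun (heGF fun k => Multiplicative.toAdd (g k)) n]
               simp
             map_mul' := fun x y => by
               funext n
               show Multiplicative.ofAdd (eF (x * y) n)
                 = Multiplicative.ofAdd (eF x n) * Multiplicative.ofAdd (eF y n)
               rw [← ofAdd_add, heMul, Pi.add_apply] }⟩, hinf, hann⟩
end

section
/- Let q = 2^f and K = 𝔽_q((ϖ)) the field of formal Laurent series over the finite field 𝔽_q with q elements, with ring of integers 𝔬 and maximal ideal 𝔭. For every integer i ≥ 0, the quotient group (𝔭^{−(2i+1)} + ℘(K)) / (𝔭^{−2i} + ℘(K)) has exactly q elements (here 𝔭^0 = 𝔬); that is, each step V_{2i} ⊂ V_{2i+1} of the filtration of K/℘(K) by images of the fractional ideals 𝔭^{−n} has 𝔽₂-codimension f. -/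
open HahnSeries

lemma aux_no_odd_pole {F : Type*} [Field F] (y : LaurentSeries F) (e : ℤ)
    (he : Odd e) (he0 : e < 0) (x : LaurentSeries F) (hx : x = y ^ 2 - y)
    (hxe : x.coeff e ≠ 0) (hlow : ∀ m : ℤ, m < e → x.coeff m = 0) : False := by
  have hy : y ≠ 0 := by rintro rfl; simp [hx] at hxe
  set d := y.order with hd
  have hy2 : (y ^ 2 : LaurentSeries F) ≠ 0 := pow_ne_zero _ hy
  have ho2 : (y ^ 2).order = 2 * d := by
    rw [pow_two, HahnSeries.order_mul hy hy]; ring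
  by_cases hdneg : d < 0
  · have hc : x.coeff (2 * d) = y.coeff d * y.coeff d := by
      have h1 : (y ^ 2).coeff (2 * d) = y.coeff d * y.coeff d := by
        have h := HahnSeries.coeff_mul_order_add_order y y
        rw [HahnSeries.leadingCoeff_eq] at h
        rw [pow_two, show (2 : ℤ) * d = y.order + y.order by rw [← hd]; ring]
        exact h
      have h2 : y.coeff (2 * d) = 0 :=
        HahnSeries.coeff_eq_zero_of_lt_order (by rw [← hd]; omega)
      rw [hx, HahnSeries.coeff_sub, h1, h2, sub_zero]
    have hcne : x.coeff (2 * d) ≠ 0 := by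
      rw [hc]
      exact mul_ne_zero (HahnSeries.coeff_order_eq_zero.not.mpr hy) (HahnSeries.coeff_order_eq_zero.not.mpr hy)
    have h2dge : e ≤ 2 * d := by by_contra h; exact hcne (hlow _ (by omega))
    have hne : 2 * d ≠ e := by
      intro h; rw [← h] at he; exact (Int.not_odd_iff_even.mpr ⟨d, by ring⟩) he
    have h2dgt : e < 2 * d := lt_of_le_of_ne h2dge (Ne.symm hne)
    apply hxe
    rw [hx, HahnSeries.coeff_sub,
      HahnSeries.coeff_eq_zero_of_lt_order (x := y ^ 2) (by rw [ho2]; exact h2dgt),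
      HahnSeries.coeff_eq_zero_of_lt_order (by rw [← hd]; omega), sub_zero]
  · push_neg at hdneg
    apply hxe
    rw [hx, HahnSeries.coeff_sub,
      HahnSeries.coeff_eq_zero_of_lt_order (x := y ^ 2) (by rw [ho2]; omega),
      HahnSeries.coeff_eq_zero_of_lt_order (by rw [← hd]; omega), sub_zero]

/-- **Each odd step of the filtration of `K/℘(K)` has index `q`, for `K = 𝔽_q((ϖ))`, `q = 2^f`.**
Let `K = 𝔽_q((ϖ))` with `q = 2^f`, let `W = ℘(K) = {y² - y : y ∈ K}` and, for `n ∈ ℕ`, let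
`V n` be the additive subgroup `𝔭^{-n} = ϖ^{-n}𝔬` of `K`, consisting of Laurent series
whose coefficients vanish in degrees `< -n`.  Then for every `i ≥ 0` the quotient
`(𝔭^{-(2i+1)} + ℘(K)) / (𝔭^{-2i} + ℘(K))` has exactly `q = 2^f` elements; i.e. each step
`V_{2i} ⊂ V_{2i+1}` of the filtration of `K/℘(K)` has `𝔽₂`-codimension `f`. -/
theorem filtration_odd_step_card
    (f : ℕ) (hf : f ≠ 0)
    (F : Type*) [Field F] [Fintype F] (hcard : Fintype.card F = 2 ^ f)
    (W : AddSubgroup (LaurentSeries F))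
    (hW : (W : Set (LaurentSeries F)) = Set.range (fun y : LaurentSeries F => y ^ 2 - y))
    (V : ℕ → AddSubgroup (LaurentSeries F))
    (hV : ∀ n : ℕ, (V n : Set (LaurentSeries F)) =
      {x : LaurentSeries F | ∀ m : ℤ, m < -(n : ℤ) → x.coeff m = 0}) :
    ∀ i : ℕ,
      Nat.card (↥(V (2 * i + 1) ⊔ W) ⧸ (V (2 * i) ⊔ W).addSubgroupOf (V (2 * i + 1) ⊔ W))
        = 2 ^ f := by
  intro i
  set e : ℤ := -((2 * i + 1 : ℕ) : ℤ) with he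
  have hee : e = -(2 * (i : ℤ) + 1) := by rw [he]; push_cast; ring
  have hmemVn : ∀ x : LaurentSeries F, (∀ m : ℤ, m < e → x.coeff m = 0) → x ∈ V (2 * i + 1) := by
    intro x hx
    have : x ∈ (V (2 * i + 1) : Set (LaurentSeries F)) := by rw [hV]; exact hx
    exact this
  have hmemV2i : ∀ x : LaurentSeries F, (∀ m : ℤ, m < -(2 * (i : ℤ)) → x.coeff m = 0) →
      x ∈ V (2 * i) := by
    intro x hx
    have : x ∈ (V (2 * i) : Set (LaurentSeries F)) := by
      rw [hV]; intro m hm; exact hx m (by push_cast at hm ⊢; omega)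
    exact this
  have hcoeffV2i : ∀ x : LaurentSeries F, x ∈ V (2 * i) →
      ∀ m : ℤ, m < -(2 * (i : ℤ)) → x.coeff m = 0 := by
    intro x hx m hm
    rw [← SetLike.mem_coe, hV] at hx
    exact hx m (by push_cast; omega)
  have hcoeffVn : ∀ x : LaurentSeries F, x ∈ V (2 * i + 1) →
      ∀ m : ℤ, m < e → x.coeff m = 0 := by
    intro x hx m hm
    rw [← SetLike.mem_coe, hV] at hx
    exact hx m hm
  have hsingle : ∀ a : F, HahnSeries.single e a ∈ V (2 * i + 1) ⊔ W := by
    intro a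
    refine AddSubgroup.mem_sup_left (hmemVn _ ?_)
    intro m hm
    exact HahnSeries.coeff_single_of_ne (ne_of_lt hm)
  set G := V (2 * i + 1) ⊔ W with hG
  set H := (V (2 * i) ⊔ W).addSubgroupOf G with hH
  let φ : F → G ⧸ H := fun a => QuotientAddGroup.mk ⟨HahnSeries.single e a, hsingle a⟩
  have hinj : Function.Injective φ := by
    intro a b hab
    rw [show φ a = QuotientAddGroup.mk ⟨HahnSeries.single e a, hsingle a⟩ from rfl,
      show φ b = QuotientAddGroup.mk ⟨HahnSeries.single e b, hsingle b⟩ from rfl,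
      QuotientAddGroup.eq, AddSubgroup.mem_addSubgroupOf] at hab
    have hco : ((-(⟨HahnSeries.single e a, hsingle a⟩ : G) +
        (⟨HahnSeries.single e b, hsingle b⟩ : G) : G) : LaurentSeries F)
        = HahnSeries.single e (b - a) := by
      push_cast
      ext m
      by_cases hm : m = e <;>
        simp [HahnSeries.coeff_add, HahnSeries.coeff_neg, HahnSeries.coeff_single, hm,
          sub_eq_neg_add]
    rw [hco] at hab
    by_contra hne
    have hc : b - a ≠ 0 := sub_ne_zero.mpr (Ne.symm hne)
    obtain ⟨v, hv, w, hw, hvw⟩ := AddSubgroup.mem_sup.mp hab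
    have hwr : w ∈ Set.range (fun y : LaurentSeries F => y ^ 2 - y) := by
      rw [← hW]; exact hw
    obtain ⟨y, hy⟩ := hwr
    refine aux_no_odd_pole y e ⟨-(i : ℤ) - 1, by rw [hee]; ring⟩ (by omega)
      (HahnSeries.single e (b - a) - v) ?_ ?_ ?_
    · rw [← hvw, ← hy]; abel
    · rw [HahnSeries.coeff_sub, HahnSeries.coeff_single_same,
        hcoeffV2i v hv e (by omega), sub_zero]
      exact hc
    · intro m hm
      rw [HahnSeries.coeff_sub, HahnSeries.coeff_single_of_ne (ne_of_lt hm),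
        hcoeffV2i v hv m (by omega), sub_zero]
  have hsurj : Function.Surjective φ := by
    intro q
    obtain ⟨⟨g, hg⟩, rfl⟩ := QuotientAddGroup.mk_surjective q
    have hg' : g ∈ V (2 * i + 1) ⊔ W := hg
    obtain ⟨v, hv, w, hw, hvw⟩ := AddSubgroup.mem_sup.mp hg'
    refine ⟨v.coeff e, ?_⟩
    rw [show φ (v.coeff e) = QuotientAddGroup.mk ⟨HahnSeries.single e (v.coeff e),
      hsingle _⟩ from rfl, QuotientAddGroup.eq, AddSubgroup.mem_addSubgroupOf]
    have hco : ((-(⟨HahnSeries.single e (v.coeff e), hsingle _⟩ : G) + (⟨g, hg⟩ : G) : G) :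
        LaurentSeries F) = (v - HahnSeries.single e (v.coeff e)) + w := by
      push_cast
      rw [← hvw]
      abel
    rw [hco]
    refine AddSubgroup.add_mem _ (AddSubgroup.mem_sup_left (hmemV2i _ ?_))
      (AddSubgroup.mem_sup_right hw)
    intro m hm
    rw [HahnSeries.coeff_sub]
    by_cases hme : m = e
    · rw [hme, HahnSeries.coeff_single_same, sub_self]
    · rw [HahnSeries.coeff_single_of_ne hme,
        hcoeffVn v hv m (by omega), sub_zero]
  have := Nat.card_eq_of_bijective φ ⟨hinj, hsurj⟩
  rw [← this, Nat.card_eq_fintype_card, hcard]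
end

section
/- Let q = 2^f and K = 𝔽_q((ϖ)) the field of formal Laurent series over the finite field 𝔽_q with q elements. For every integer n ≥ 0, the image V_n of the fractional ideal 𝔭^{−n} under the quotient map K → K/℘(K) is a finite 𝔽₂-vector space of cardinality 2·q^{⌈n/2⌉}, i.e. of 𝔽₂-dimension 1 + f·⌈n/2⌉, where ⌈x⌉ denotes the smallest integer not less than x. -/
open Filter Topology LaurentSeries Multiplicative HahnSeries
open scoped Multiplicative

noncomputable section AS

variable {F : Type*} [Field F]

instance : NonarchimedeanAddGroup (LaurentSeries F) := by
  constructor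
  intro U hU
  obtain ⟨γ, hγ⟩ := Valued.mem_nhds_zero.mp hU
  exact ⟨⟨(Valued.v : Valuation (LaurentSeries F) (WithZero (Multiplicative ℤ))).restrict.ltAddSubgroup γ,
    AddSubgroup.isOpen_of_mem_nhds _ (Valued.mem_nhds_zero.mpr ⟨γ, fun x hx => hx⟩)⟩, hγ⟩

theorem AS.tendsto_pow2 (x : LaurentSeries F)
    (hx : Valued.v x ≤ ((ofAdd (-1 : ℤ) : Multiplicative ℤ) : (WithZero (Multiplicative ℤ)))) :
    Tendsto (fun i : ℕ => x ^ (2 ^ i)) cofinite (𝓝 0) := by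
  rw [Nat.cofinite_eq_atTop]
  rw [(Valued.hasBasis_nhds_zero (LaurentSeries F) (WithZero (Multiplicative ℤ))).tendsto_right_iff]
  intro γ _
  simp only [Set.mem_setOf_eq, Valuation.restrict_lt_iff_lt_embedding]
  obtain ⟨c, hc⟩ := WithZero.ne_zero_iff_exists.mp
    (show MonoidWithZeroHom.ValueGroup₀.embedding γ.1 ≠ 0 by simp)
  filter_upwards [eventually_ge_atTop ((- toAdd c).toNat + 1)] with i hi
  have h1 : Valued.v (x ^ (2 ^ i)) ≤ ((ofAdd (-(2^i : ℤ)) : Multiplicative ℤ) : (WithZero (Multiplicative ℤ))) := by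
    rw [map_pow]
    calc Valued.v x ^ (2^i) ≤ ((ofAdd (-1 : ℤ) : Multiplicative ℤ) : (WithZero (Multiplicative ℤ))) ^ (2^i) :=
          pow_le_pow_left' hx _
      _ = ((ofAdd (-(2^i : ℤ)) : Multiplicative ℤ) : (WithZero (Multiplicative ℤ))) := by
          rw [← WithZero.coe_pow, ← ofAdd_nsmul]
          norm_num
  refine lt_of_le_of_lt h1 ?_
  rw [← hc, WithZero.coe_lt_coe, ← ofAdd_toAdd c, Multiplicative.ofAdd_lt]
  have h2 : ((-toAdd c).toNat : ℤ) + 1 ≤ (i:ℤ) := by exact_mod_cast hi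
  have h3 : (i:ℤ) < (2:ℤ)^i := by exact_mod_cast (Nat.lt_two_pow_self (n := i))
  have h4 : -toAdd c ≤ ((-toAdd c).toNat : ℤ) := Int.self_le_toNat _
  linarith

/-- Any Laurent series with only positive-degree terms is in the range of `y ↦ y² - y`. -/
theorem AS.pos_part [CharP F 2] (z : LaurentSeries F)
    (hz : ∀ m : ℤ, m < 1 → z.coeff m = 0) :
    ∃ y : LaurentSeries F, y ^ 2 - y = z := by
  haveI : CharP (LaurentSeries F) 2 := charP_of_injective_ringHom HahnSeries.C_injective 2
  have hv : Valued.v z ≤ ((ofAdd (-1 : ℤ) : Multiplicative ℤ) : (WithZero (Multiplicative ℤ))) :=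
    (valuation_le_iff_coeff_lt_eq_zero F (D := 1)).mpr hz
  have hsum : Summable (fun i : ℕ => z ^ (2 ^ i)) :=
    NonarchimedeanAddGroup.summable_of_tendsto_cofinite_zero (AS.tendsto_pow2 z hv)
  set y := ∑' i, z ^ (2 ^ i) with hy
  refine ⟨y, ?_⟩
  have hcoe : ⇑(frobenius (LaurentSeries F) 2).toAddMonoidHom = fun w => w ^ 2 :=
    funext fun w => frobenius_def 2 w
  have hfs : HasSum (fun i : ℕ => (z ^ (2 ^ i)) ^ 2) (y ^ 2) := by
    have := hsum.hasSum.map (frobenius (LaurentSeries F) 2).toAddMonoidHom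
      (by rw [hcoe]; exact continuous_pow 2)
    simpa [hcoe, Function.comp_def, frobenius_def] using this
  have hfs' : HasSum (fun i : ℕ => z ^ (2 ^ (i + 1))) (y ^ 2) := by
    convert hfs using 2 with i
    rw [← pow_mul, pow_succ]
  have hshift : y = z + y ^ 2 := by
    have := Summable.tsum_eq_zero_add hsum
    simpa [hfs'.tsum_eq] using this
  have h2 : y ^ 2 - y = -z := by nth_rewrite 2 [hshift]; ring
  rw [h2, CharTwo.neg_eq]

/-- The "admissible support" predicate: degree `0` or odd negative degree `≥ -n`. -/
def AS.P (n : ℕ) (m : ℤ) : Prop := m = 0 ∨ (Odd m ∧ -(n:ℤ) ≤ m ∧ m < 0)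

instance (n : ℕ) (m : ℤ) : Decidable (AS.P n m) := by unfold AS.P; infer_instance

/-- The group of "reduced representatives". -/
def AS.SG (F : Type*) [Field F] (n : ℕ) : AddSubgroup (LaurentSeries F) where
  carrier := {x | ∀ m : ℤ, ¬ AS.P n m → x.coeff m = 0}
  zero_mem' := fun m _ => HahnSeries.coeff_zero
  add_mem' := by
    intro a b ha hb m hm
    rw [HahnSeries.coeff_add, ha m hm, hb m hm, add_zero]
  neg_mem' := by
    intro a ha m hm
    rw [HahnSeries.coeff_neg, ha m hm, neg_zero]

theorem AS.SG_mono {n n' : ℕ} (h : n ≤ n') : AS.SG F n ≤ AS.SG F n' := by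
  intro x hx m hm
  refine hx m (fun hPm => hm ?_)
  rcases hPm with h0 | ⟨ho, h1, h2⟩
  · exact Or.inl h0
  · exact Or.inr ⟨ho, le_trans (by exact_mod_cast neg_le_neg (Int.ofNat_le.mpr h)) h1, h2⟩

theorem AS.mem_SG {n : ℕ} {x : LaurentSeries F} :
    x ∈ AS.SG F n ↔ ∀ m : ℤ, ¬ AS.P n m → x.coeff m = 0 := Iff.rfl

/-- classification of admissible positions -/
theorem AS.P_classify {n : ℕ} {m : ℤ} (h : AS.P n m) :
    m = 0 ∨ ∃ j : Fin ((n+1)/2), m = -(2*(j:ℤ)+1) := by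
  rcases h with h0 | ⟨⟨t, ht⟩, h1, h2⟩
  · exact Or.inl h0
  · right
    refine ⟨⟨(-(t+1)).toNat, by omega⟩, by simp only []; omega⟩

theorem AS.P_of_j {n : ℕ} (j : Fin ((n+1)/2)) : AS.P n (-(2*(j:ℤ)+1)) := by
  have hj : (j:ℕ) < (n+1)/2 := j.2
  exact Or.inr ⟨⟨-((j:ℤ)+1), by ring⟩, by omega, by omega⟩

/-- the coefficient extraction additive hom -/
def AS.coeffHom (m : ℤ) : LaurentSeries F →+ F where
  toFun x := x.coeff m
  map_zero' := HahnSeries.coeff_zero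
  map_add' _ _ := HahnSeries.coeff_add

theorem AS.coeff_sum {ι : Type*} (s : Finset ι) (g : ι → LaurentSeries F) (m : ℤ) :
    (∑ i ∈ s, g i).coeff m = ∑ i ∈ s, (g i).coeff m :=
  map_sum (AS.coeffHom m) g s


-- bijection for counting SG
theorem AS.SG_card (n : ℕ) [Fintype F] :
    Nat.card (AS.SG F n) = (Fintype.card F) ^ ((n+1)/2 + 1) := by
  set k := (n+1)/2 with hk
  have hinj : ∀ (j j' : Fin k), (-(2*(j:ℤ)+1)) = (-(2*(j':ℤ)+1)) → j = j' := by
    intro j j' h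
    have : (j:ℤ) = (j':ℤ) := by omega
    exact Fin.ext (by exact_mod_cast this)
  let e : AS.SG F n → (Fin k → F) × F :=
    fun x => (fun j => x.val.coeff (-(2*(j:ℤ)+1)), x.val.coeff 0)
  have hbij : Function.Bijective e := by
    constructor
    · intro x x' h
      have h1 := congrArg Prod.fst h
      have h2 := congrArg Prod.snd h
      simp only [e] at h1 h2
      ext1
      apply HahnSeries.coeff_injective
      funext m
      by_cases hm : AS.P n m
      · rcases AS.P_classify hm with rfl | ⟨j, rfl⟩
        · exact h2
        · exact congrFun h1 j
      · rw [x.2 m hm, x'.2 m hm]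
    · rintro ⟨a, c⟩
      set y : LaurentSeries F :=
        HahnSeries.single 0 c + ∑ j : Fin k, HahnSeries.single (-(2*(j:ℤ)+1)) (a j) with hy
      have hcoeff : ∀ m : ℤ, y.coeff m =
          (HahnSeries.single (0:ℤ) c).coeff m
            + ∑ j : Fin k, (HahnSeries.single (-(2*(j:ℤ)+1)) (a j)).coeff m := by
        intro m
        rw [hy, HahnSeries.coeff_add, AS.coeff_sum]
      have hc0 : y.coeff 0 = c := by
        rw [hcoeff, HahnSeries.coeff_single_same, Finset.sum_eq_zero fun j _ =>
          HahnSeries.coeff_single_of_ne (by omega), add_zero]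
      have hcj : ∀ j : Fin k, y.coeff (-(2*(j:ℤ)+1)) = a j := by
        intro j
        rw [hcoeff, HahnSeries.coeff_single_of_ne (by omega),
          Finset.sum_eq_single j
            (fun j' _ hj' => HahnSeries.coeff_single_of_ne
              (fun hc => hj' (hinj j' j hc.symm)))
            (fun hj => absurd (Finset.mem_univ j) hj),
          HahnSeries.coeff_single_same, zero_add]
      have hmem : y ∈ AS.SG F n := by
        intro m hm
        rw [hcoeff, HahnSeries.coeff_single_of_ne (fun h0 => hm (Or.inl h0)),
          Finset.sum_eq_zero fun j _ => HahnSeries.coeff_single_of_ne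
            (fun hc => hm (by rw [hc]; exact AS.P_of_j j)), add_zero]
      refine ⟨⟨y, hmem⟩, ?_⟩
      simp only [e]
      exact Prod.ext (funext fun j => hcj j) hc0
  rw [Nat.card_congr (Equiv.ofBijective e hbij)]
  simp [Nat.card_eq_fintype_card, pow_succ]

theorem AS.const_of_SG [CharP F 2] {n : ℕ} {y : LaurentSeries F}
    (hS : y ^ 2 - y ∈ AS.SG F n) : ∃ c : F, y = HahnSeries.single 0 c := by
  haveI : CharP (LaurentSeries F) 2 := charP_of_injective_ringHom HahnSeries.C_injective 2
  have hneg : ∀ m : ℤ, m < 0 → y.coeff m = 0 := by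
    by_contra hcon
    push_neg at hcon
    obtain ⟨m, hm, hym⟩ := hcon
    have hy0 : y ≠ 0 := fun h => hym (by rw [h]; exact HahnSeries.coeff_zero)
    have hord : y.order ≤ m := HahnSeries.order_le_of_coeff_ne_zero hym
    have hdlt : y.order < 0 := lt_of_le_of_lt hord hm
    have hlc : y.leadingCoeff ≠ 0 := HahnSeries.leadingCoeff_ne_zero.mpr hy0
    have hsq : (y * y).coeff (y.order + y.order) = y.leadingCoeff * y.leadingCoeff :=
      HahnSeries.coeff_mul_order_add_order y y
    have hylow : y.coeff (y.order + y.order) = 0 :=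
      HahnSeries.coeff_eq_zero_of_lt_order (by omega)
    have hcoeff : (y ^ 2 - y).coeff (y.order + y.order) = y.leadingCoeff * y.leadingCoeff := by
      rw [HahnSeries.coeff_sub, sq, hsq, hylow, sub_zero]
    have hP : ¬ AS.P n (y.order + y.order) := by
      rintro (h0 | ⟨⟨t, ht⟩, _, _⟩) <;> omega
    rw [hS _ hP] at hcoeff
    exact hlc (mul_self_eq_zero.mp hcoeff.symm)
  set c := y.coeff 0 with hc
  refine ⟨c, ?_⟩
  set u := y - HahnSeries.single 0 c with hu
  have hu0 : ∀ m : ℤ, m ≤ 0 → u.coeff m = 0 := by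
    intro m hm
    rcases eq_or_lt_of_le hm with rfl | h
    · rw [hu, HahnSeries.coeff_sub, HahnSeries.coeff_single_same, sub_eq_zero]
    · rw [hu, HahnSeries.coeff_sub, hneg m h,
        HahnSeries.coeff_single_of_ne (ne_of_lt h), sub_zero]
  have hsingsub : HahnSeries.single (0:ℤ) (c ^ 2 - c)
      = HahnSeries.single 0 (c^2) - HahnSeries.single (0:ℤ) c := by
    apply HahnSeries.coeff_injective; funext m
    by_cases hm : m = (0:ℤ)
    · subst hm
      rw [HahnSeries.coeff_sub, HahnSeries.coeff_single_same, HahnSeries.coeff_single_same,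
        HahnSeries.coeff_single_same]
    · rw [HahnSeries.coeff_sub, HahnSeries.coeff_single_of_ne hm,
        HahnSeries.coeff_single_of_ne hm, HahnSeries.coeff_single_of_ne hm, sub_zero]
  have husplit : u ^ 2 - u = (y ^ 2 - y) - HahnSeries.single 0 (c ^ 2 - c) := by
    have hy' : y = HahnSeries.single 0 c + u := by rw [hu]; ring
    have hsing : (HahnSeries.single (0:ℤ) c) ^ 2 = HahnSeries.single 0 (c ^ 2) := by
      rw [sq, HahnSeries.single_mul_single, add_zero, sq]
    calc u ^ 2 - u = ((HahnSeries.single (0:ℤ) c) ^ 2 + u ^ 2)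
          - (HahnSeries.single 0 c + u) - ((HahnSeries.single (0:ℤ) c) ^ 2
          - HahnSeries.single 0 c) := by ring
      _ = (y ^ 2 - y) - HahnSeries.single 0 (c ^ 2 - c) := by
          rw [← CharTwo.add_sq, ← hy', hsingsub, hsing]
  have hUzero : u = 0 := by
    by_contra hu0'
    have hordle : 1 ≤ u.order := by
      by_contra hlt
      push_neg at hlt
      have hlc := HahnSeries.leadingCoeff_ne_zero.mpr hu0'
      rw [HahnSeries.leadingCoeff_eq] at hlc
      exact hlc (hu0 _ (by omega))
    have hlc : u.leadingCoeff ≠ 0 := HahnSeries.leadingCoeff_ne_zero.mpr hu0'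
    have h1 : (u ^ 2 - u).coeff u.order = - u.leadingCoeff := by
      have hmul : (u * u).coeff u.order = 0 := by
        apply HahnSeries.coeff_eq_zero_of_lt_order
        rw [HahnSeries.order_mul hu0' hu0']
        omega
      rw [HahnSeries.coeff_sub, sq, hmul, HahnSeries.leadingCoeff_eq, zero_sub]
    have h2 : (u ^ 2 - u).coeff u.order = 0 := by
      rw [husplit, HahnSeries.coeff_sub, hS _ ?_,
        HahnSeries.coeff_single_of_ne (by omega), sub_zero]
      rintro (h0 | ⟨_, _, hlt0⟩) <;> omega
    rw [h2, eq_comm, neg_eq_zero] at h1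
    exact hlc h1
  rw [hu] at hUzero
  exact (sub_eq_zero.mp hUzero)

theorem AS.red [CharP F 2] (hsq : ∀ a : F, ∃ b : F, b ^ 2 = a)
    (W : AddSubgroup (LaurentSeries F))
    (hW : (W : Set (LaurentSeries F)) = Set.range (fun y : LaurentSeries F => y ^ 2 - y)) :
    ∀ n : ℕ, ∀ x : LaurentSeries F, (∀ m : ℤ, m < -(n:ℤ) → x.coeff m = 0) →
      (∀ m : ℤ, 0 < m → x.coeff m = 0) → ∃ s ∈ AS.SG F n, x - s ∈ W := by
  have hWmem : ∀ y : LaurentSeries F, y ^ 2 - y ∈ W := by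
    intro y
    have : y ^ 2 - y ∈ (W : Set (LaurentSeries F)) := by
      rw [hW]; exact ⟨y, rfl⟩
    exact this
  intro n
  induction n with
  | zero =>
    intro x h1 h2
    refine ⟨x, ?_, by rw [sub_self]; exact W.zero_mem⟩
    intro m hm
    rcases lt_trichotomy m 0 with h | h | h
    · exact h1 m (by omega)
    · exact absurd (Or.inl h) hm
    · exact h2 m h
  | succ n ih =>
    intro x h1 h2
    set a := x.coeff (-((n:ℤ)+1)) with ha
    rcases Nat.even_or_odd (n+1) with ⟨k, hk⟩ | hodd
    · -- even case
      have hk1 : 1 ≤ k := by omega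
      obtain ⟨b, hb⟩ := hsq a
      set u : LaurentSeries F := HahnSeries.single (-(k:ℤ)) b with hu
      have husq : u ^ 2 = HahnSeries.single (-((n:ℤ)+1)) a := by
        have he : -(k:ℤ) + -(k:ℤ) = -((n:ℤ)+1) := by omega
        rw [hu, sq, HahnSeries.single_mul_single, ← sq, hb, he]
      set x' := x - (u ^ 2 - u) with hx'
      have hx'1 : ∀ m : ℤ, m < -(n:ℤ) → x'.coeff m = 0 := by
        intro m hm
        rw [hx', HahnSeries.coeff_sub, HahnSeries.coeff_sub, husq, hu]
        rcases eq_or_lt_of_le (show m ≤ -((n:ℤ)+1) by omega) with rfl | hlt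
        · rw [HahnSeries.coeff_single_same, HahnSeries.coeff_single_of_ne (by omega), ← ha]
          ring
        · rw [h1 m (by omega), HahnSeries.coeff_single_of_ne (by omega),
            HahnSeries.coeff_single_of_ne (by omega)]
          ring
      have hx'2 : ∀ m : ℤ, 0 < m → x'.coeff m = 0 := by
        intro m hm
        rw [hx', HahnSeries.coeff_sub, HahnSeries.coeff_sub, husq, hu,
          h2 m hm, HahnSeries.coeff_single_of_ne (by omega),
          HahnSeries.coeff_single_of_ne (by omega)]
        ring
      obtain ⟨s, hsS, hsW⟩ := ih x' hx'1 hx'2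
      refine ⟨s, AS.SG_mono (Nat.le_succ n) hsS, ?_⟩
      have hre : x - s = (u ^ 2 - u) + (x' - s) := by rw [hx']; ring
      rw [hre]
      exact W.add_mem (hWmem u) hsW
    · -- odd case
      set x' := x - HahnSeries.single (-((n:ℤ)+1)) a with hx'
      have hx'1 : ∀ m : ℤ, m < -(n:ℤ) → x'.coeff m = 0 := by
        intro m hm
        rw [hx', HahnSeries.coeff_sub]
        rcases eq_or_lt_of_le (show m ≤ -((n:ℤ)+1) by omega) with rfl | hlt
        · rw [HahnSeries.coeff_single_same, ← ha, sub_self]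
        · rw [h1 m (by omega), HahnSeries.coeff_single_of_ne (by omega), sub_zero]
      have hx'2 : ∀ m : ℤ, 0 < m → x'.coeff m = 0 := by
        intro m hm
        rw [hx', HahnSeries.coeff_sub, h2 m hm,
          HahnSeries.coeff_single_of_ne (by omega), sub_zero]
      obtain ⟨s, hsS, hsW⟩ := ih x' hx'1 hx'2
      have hmemsingle : HahnSeries.single (-((n:ℤ)+1)) a ∈ AS.SG F (n+1) := by
        intro m hm
        refine HahnSeries.coeff_single_of_ne (fun hme => hm ?_)
        subst hme
        refine Or.inr ⟨?_, by push_cast; omega, by omega⟩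
        obtain ⟨t, ht⟩ := hodd
        exact ⟨-(t:ℤ)-1, by omega⟩
      refine ⟨s + HahnSeries.single (-((n:ℤ)+1)) a,
        (AS.SG F (n+1)).add_mem (AS.SG_mono (Nat.le_succ n) hsS) hmemsingle, ?_⟩
      have hre : x - (s + HahnSeries.single (-((n:ℤ)+1)) a) = x' - s := by rw [hx']; ring
      rw [hre]
      exact hsW

end AS

/-- **Cardinality of the filtration steps `V_n` of `K/℘(K)`, for `K = 𝔽_q((ϖ))`, `q = 2^f`.**
Let `K = 𝔽_q((ϖ))` with `q = 2^f`, let `W = ℘(K) = {y² - y : y ∈ K}` and, for `n ∈ ℕ`, let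
`V n` be the additive subgroup `𝔭^{-n} = ϖ^{-n}𝔬` of `K`, consisting of Laurent series
whose coefficients vanish in degrees `< -n`.  Then for every `n ≥ 0` the image `V_n` of
`𝔭^{-n}` under the quotient map `K → K/℘(K)` is finite of cardinality `2·q^{⌈n/2⌉}`,
i.e. it is an `𝔽₂`-vector space of dimension `1 + f·⌈n/2⌉` (here `⌈n/2⌉ = (n+1)/2` in
natural division). -/
theorem filtration_step_card
    (f : ℕ) (hf : f ≠ 0)
    (F : Type*) [Field F] [Fintype F] (hcard : Fintype.card F = 2 ^ f)
    (W : AddSubgroup (LaurentSeries F))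
    (hW : (W : Set (LaurentSeries F)) = Set.range (fun y : LaurentSeries F => y ^ 2 - y))
    (V : ℕ → AddSubgroup (LaurentSeries F))
    (hV : ∀ n : ℕ, (V n : Set (LaurentSeries F)) =
      {x : LaurentSeries F | ∀ m : ℤ, m < -(n : ℤ) → x.coeff m = 0}) :
    ∀ n : ℕ,
      Nat.card (AddSubgroup.map (QuotientAddGroup.mk' W) (V n))
        = 2 * (2 ^ f) ^ ((n + 1) / 2) := by
  -- characteristic 2
  have hp2 : CharP F 2 := by
    obtain ⟨p, hpinst⟩ := CharP.exists F
    haveI := hpinst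
    obtain ⟨m, hpprime, hcard'⟩ := FiniteField.card F p
    have hdvd : p ∣ 2 ^ f := by
      rw [← hcard, hcard']
      exact dvd_pow_self p (by exact_mod_cast m.ne_zero)
    have hp2 : p = 2 :=
      (Nat.prime_dvd_prime_iff_eq hpprime Nat.prime_two).mp (hpprime.dvd_of_dvd_pow hdvd)
    exact hp2 ▸ hpinst
  haveI := hp2
  haveI : CharP (LaurentSeries F) 2 := charP_of_injective_ringHom HahnSeries.C_injective 2
  have hsq : ∀ a : F, ∃ b : F, b ^ 2 = a := by
    intro a
    obtain ⟨b, hb⟩ := Finite.surjective_of_injective (frobenius_inj F 2) a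
    exact ⟨b, by rwa [frobenius_def] at hb⟩
  have hWmem : ∀ y : LaurentSeries F, y ^ 2 - y ∈ W := by
    intro y
    have : y ^ 2 - y ∈ (W : Set (LaurentSeries F)) := by rw [hW]; exact ⟨y, rfl⟩
    exact this
  intro n
  set k := (n+1)/2 with hk
  -- SG ≤ V n
  have hSGle : AS.SG F n ≤ V n := by
    intro x hx
    have : x ∈ (V n : Set (LaurentSeries F)) := by
      rw [hV n]
      intro m hm
      exact hx m (fun hP => by rcases hP with h0 | ⟨_, hge, _⟩ <;> omega)
    exact this
  -- the two maps agree
  have hmapeq : AddSubgroup.map (QuotientAddGroup.mk' W) (V n)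
      = AddSubgroup.map (QuotientAddGroup.mk' W) (AS.SG F n) := by
    apply le_antisymm
    · rintro q hq
      obtain ⟨x, hx, rfl⟩ := AddSubgroup.mem_map.mp hq
      have hxV : ∀ m : ℤ, m < -(n:ℤ) → x.coeff m = 0 := by
        have hxset : x ∈ (V n : Set (LaurentSeries F)) := hx
        rw [hV n] at hxset
        exact hxset
      set xneg : LaurentSeries F :=
        ∑ j ∈ Finset.range (n+1), HahnSeries.single (-(j:ℤ)) (x.coeff (-(j:ℤ))) with hxneg
      have hcne : ∀ m : ℤ, (m < -(n:ℤ) ∨ 0 < m) → xneg.coeff m = 0 := by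
        intro m hm
        rw [hxneg, AS.coeff_sum]
        refine Finset.sum_eq_zero fun j hj => HahnSeries.coeff_single_of_ne ?_
        have := Finset.mem_range.mp hj
        omega
      have hceq : ∀ m : ℤ, -(n:ℤ) ≤ m → m ≤ 0 → xneg.coeff m = x.coeff m := by
        intro m hm1 hm2
        rw [hxneg, AS.coeff_sum]
        rw [Finset.sum_eq_single (-m).toNat]
        · rw [show -(((-m).toNat : ℕ) : ℤ) = m by omega, HahnSeries.coeff_single_same]
        · intro j hj hne
          exact HahnSeries.coeff_single_of_ne (by omega)
        · intro hnotin
          exact absurd (Finset.mem_range.mpr (by omega)) hnotin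
      obtain ⟨y, hy⟩ := AS.pos_part (x - xneg) (fun m hm => by
        rcases lt_or_ge m (-(n:ℤ)) with h | h
        · rw [HahnSeries.coeff_sub, hxV m h, hcne m (Or.inl h), sub_zero]
        · rw [HahnSeries.coeff_sub, hceq m h (by omega), sub_self])
      have hposW : x - xneg ∈ W := by
        rw [← hy]
        exact hWmem y
      obtain ⟨s, hsS, hsW⟩ := AS.red hsq W hW n xneg
        (fun m hm => hcne m (Or.inl hm)) (fun m hm => hcne m (Or.inr hm))
      refine AddSubgroup.mem_map.mpr ⟨s, hsS, ?_⟩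
      have hxs : x - s ∈ W := by
        have := W.add_mem hposW hsW
        rwa [sub_add_sub_cancel] at this
      refine (QuotientAddGroup.mk'_eq_mk' W).mpr ⟨x - s, hxs, by ring⟩
    · exact AddSubgroup.map_mono hSGle
  rw [hmapeq]
  -- counting
  set φ := (QuotientAddGroup.mk' W).comp (AS.SG F n).subtype with hφ
  have hrange : AddSubgroup.map (QuotientAddGroup.mk' W) (AS.SG F n) = φ.range := by
    rw [hφ, AddMonoidHom.range_comp, AddSubgroup.range_subtype]
  -- the Artin-Schreier map on constants
  set pF : F →+ F := AddMonoidHom.mk' (fun a => a^2 - a)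
    (by
      intro a b
      show (a+b)^2 - (a+b) = (a^2-a) + (b^2-b)
      rw [CharTwo.add_sq]
      ring) with hpF
  have hpFapp : ∀ a : F, pF a = a^2 - a := fun a => rfl
  have hkerpF : Nat.card pF.ker = 2 := by
    have hset : (pF.ker : Set F) = {0, 1} := by
      ext x
      simp only [SetLike.mem_coe, AddMonoidHom.mem_ker, hpFapp, Set.mem_insert_iff,
        Set.mem_singleton_iff]
      constructor
      · intro h
        have : x * (x - 1) = 0 := by rw [← h]; ring
        rcases mul_eq_zero.mp this with h0 | h1
        · exact Or.inl h0
        · exact Or.inr (by linear_combination h1)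
      · rintro (rfl | rfl) <;> ring
    have : Nat.card pF.ker = Nat.card ({0, 1} : Set F) := by rw [← hset]; rfl
    rw [this, Nat.card_coe_set_eq, Set.ncard_pair (zero_ne_one)]
  have hrangepF : Nat.card pF.range * 2 = 2^f := by
    have h1 : Nat.card (F ⧸ pF.ker) = Nat.card pF.range :=
      Nat.card_congr (QuotientAddGroup.quotientKerEquivRange pF).toEquiv
    have h2 := AddSubgroup.card_eq_card_quotient_mul_card_addSubgroup (pF.ker)
    rw [Nat.card_eq_fintype_card, hcard] at h2
    calc Nat.card pF.range * 2 = Nat.card (F ⧸ pF.ker) * Nat.card pF.ker := by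
          rw [h1, hkerpF]
      _ = 2 ^ f := h2.symm
  -- a reduced element of W is a constant in the range of pF
  have hkey : ∀ x : LaurentSeries F, x ∈ AS.SG F n → x ∈ W →
      ∃ c : F, pF c = x.coeff 0 ∧ x = HahnSeries.single 0 (pF c) := by
    intro x hxS hxW
    have hxW' : x ∈ (W : Set (LaurentSeries F)) := hxW
    rw [hW] at hxW'
    obtain ⟨y, hy⟩ := hxW'
    have hy' : y ^ 2 - y = x := hy
    obtain ⟨c, hc⟩ := AS.const_of_SG (n := n) (y := y) (by rw [hy']; exact hxS)
    have hsing : x = HahnSeries.single 0 (c^2 - c) := by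
      rw [← hy', hc, sq, HahnSeries.single_mul_single, add_zero]
      apply HahnSeries.coeff_injective
      funext m
      by_cases hm : m = (0:ℤ)
      · subst hm
        rw [HahnSeries.coeff_sub, HahnSeries.coeff_single_same, HahnSeries.coeff_single_same,
          HahnSeries.coeff_single_same, sq]
      · rw [HahnSeries.coeff_sub, HahnSeries.coeff_single_of_ne hm,
          HahnSeries.coeff_single_of_ne hm, HahnSeries.coeff_single_of_ne hm, sub_zero]
    refine ⟨c, ?_, by rw [hsing, hpFapp]⟩
    rw [hsing, HahnSeries.coeff_single_same, hpFapp]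
  -- the kernel of φ is in bijection with the range of pF
  have hsingmem : ∀ c : F, HahnSeries.single (0:ℤ) c ∈ AS.SG F n := by
    intro c m hm
    exact HahnSeries.coeff_single_of_ne (fun h0 => hm (Or.inl h0))
  have hsingW : ∀ b : F, HahnSeries.single (0:ℤ) (pF b) ∈ W := by
    intro b
    have : HahnSeries.single (0:ℤ) (pF b)
        = (HahnSeries.single (0:ℤ) b)^2 - HahnSeries.single (0:ℤ) b := by
      rw [sq, HahnSeries.single_mul_single, add_zero, hpFapp]
      apply HahnSeries.coeff_injective
      funext m
      by_cases hm : m = (0:ℤ)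
      · subst hm
        rw [HahnSeries.coeff_sub, HahnSeries.coeff_single_same, HahnSeries.coeff_single_same,
          HahnSeries.coeff_single_same, sq]
      · rw [HahnSeries.coeff_sub, HahnSeries.coeff_single_of_ne hm,
          HahnSeries.coeff_single_of_ne hm, HahnSeries.coeff_single_of_ne hm, sub_zero]
    rw [this]
    exact hWmem _
  have hkermem : ∀ s : AS.SG F n, (s ∈ φ.ker ↔ (s : LaurentSeries F) ∈ W) := by
    intro s
    rw [AddMonoidHom.mem_ker, hφ, AddMonoidHom.comp_apply, AddSubgroup.coe_subtype,
      QuotientAddGroup.mk'_apply, QuotientAddGroup.eq_zero_iff]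
  have hkerφ : Nat.card φ.ker = Nat.card pF.range := by
    apply Nat.card_congr
    refine Equiv.ofBijective
      (fun s => ⟨(s.val : LaurentSeries F).coeff 0, ?_⟩) ⟨?_, ?_⟩
    · obtain ⟨c, hc1, _⟩ := hkey _ s.val.2 ((hkermem s.val).mp s.2)
      exact ⟨c, hc1⟩
    · intro s s' h
      obtain ⟨c, hc1, hc2⟩ := hkey _ s.val.2 ((hkermem s.val).mp s.2)
      obtain ⟨c', hc1', hc2'⟩ := hkey _ s'.val.2 ((hkermem s'.val).mp s'.2)
      have hcoeff : (s.val : LaurentSeries F).coeff 0 = (s'.val : LaurentSeries F).coeff 0 :=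
        congrArg Subtype.val h
      ext1; ext1
      rw [hc2, hc2', hc1, hc1', hcoeff]
    · rintro ⟨c, b, hb⟩
      refine ⟨⟨⟨HahnSeries.single 0 (pF b), hsingmem _⟩, (hkermem _).mpr (hsingW b)⟩, ?_⟩
      ext1
      simp only [HahnSeries.coeff_single_same]
      exact hb
  -- assemble the count
  have hcardSG : Nat.card (AS.SG F n) = (2^f)^(k+1) := by
    rw [AS.SG_card n, hcard, ← hk]
  have h1 : Nat.card (AS.SG F n ⧸ φ.ker) = Nat.card φ.range :=
    Nat.card_congr (QuotientAddGroup.quotientKerEquivRange φ).toEquiv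
  have h2 := AddSubgroup.card_eq_card_quotient_mul_card_addSubgroup (φ.ker)
  rw [hcardSG, h1, hkerφ] at h2
  -- h2 : (2^f)^(k+1) = Nat.card φ.range * Nat.card pF.range
  rw [hrange]
  have hfin : Nat.card φ.range * (2^f) = (2 * (2^f)^k) * (2^f) := by
    calc Nat.card φ.range * (2^f) = Nat.card φ.range * (Nat.card pF.range * 2) := by
          rw [hrangepF]
      _ = ((2^f)^(k+1)) * 2 := by rw [← mul_assoc, ← h2]
      _ = (2 * (2^f)^k) * (2^f) := by ring
  exact Nat.eq_of_mul_eq_mul_right (by positivity) hfin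
end
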